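/- arXiv:0901.0203 — 7 statements merged into one kernel-verified Lean document; each statement's English description precedes it below -/
import Mathlib

section
/- The subgroup G of GL(6,ℤ) generated by the matrices M_X, M_Y, M_Z is a finite group of order exactly 96. (This is the order of the duality group DF₃ of triple vector bundles, which acts faithfully by these matrices.) -/
open Matrix

/-- The matrix of the dualization functor `X` acting on `(γ,β,α,λ,μ,ν)`. -/
def MXmat : Matrix (Fin 6) (Fin 6) ℤ :=
  !![0,0,0,0,-1,0; 0,0,0,0,0,-1; 0,0,1,0,0,0; 0,0,0,-1,0,0; -1,0,0,0,0,0; 0,-1,0,0,0,0]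

/-- The matrix of the dualization functor `Y`. -/
def MYmat : Matrix (Fin 6) (Fin 6) ℤ :=
  !![0,0,0,-1,0,0; 0,1,0,0,0,0; 0,0,0,0,0,-1; -1,0,0,0,0,0; 0,0,0,0,-1,0; 0,0,-1,0,0,0]

/-- The matrix of the dualization functor `Z`. -/
def MZmat : Matrix (Fin 6) (Fin 6) ℤ :=
  !![1,0,0,0,0,0; 0,0,0,-1,0,0; 0,0,0,0,-1,0; 0,-1,0,0,0,0; 0,0,-1,0,0,0; 0,0,0,0,0,-1]

/-- `M_X` as an element of `GL(6,ℤ)` (it is an involution, so it is its own inverse). -/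
def MX : GL (Fin 6) ℤ := ⟨MXmat, MXmat, by decide, by decide⟩

/-- `M_Y` as an element of `GL(6,ℤ)`. -/
def MY : GL (Fin 6) ℤ := ⟨MYmat, MYmat, by decide, by decide⟩

/-- `M_Z` as an element of `GL(6,ℤ)`. -/
def MZ : GL (Fin 6) ℤ := ⟨MZmat, MZmat, by decide, by decide⟩

/-- The subgroup of `GL(6,ℤ)` generated by `M_X`, `M_Y`, `M_Z`: a faithful model of the
duality group `DF₃` of triple vector bundles. -/
def G : Subgroup (GL (Fin 6) ℤ) := Subgroup.closure {MX, MY, MZ}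

lemma hMX : MX ∈ G := Subgroup.subset_closure (by simp)
lemma hMY : MY ∈ G := Subgroup.subset_closure (by simp)
lemma hMZ : MZ ∈ G := Subgroup.subset_closure (by simp)

def g₁ : GL (Fin 6) ℤ := (MX * MY * MX * MZ) ^ 2
def g₂ : GL (Fin 6) ℤ := (MY * MZ * MY * MX) ^ 2
def g₃ : GL (Fin 6) ℤ := (MZ * MX * MZ * MY) ^ 2

lemma hg₁ : g₁ ∈ G :=
  G.pow_mem (G.mul_mem (G.mul_mem (G.mul_mem hMX hMY) hMX) hMZ) 2
lemma hg₂ : g₂ ∈ G :=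
  G.pow_mem (G.mul_mem (G.mul_mem (G.mul_mem hMY hMZ) hMY) hMX) 2
lemma hg₃ : g₃ ∈ G :=
  G.pow_mem (G.mul_mem (G.mul_mem (G.mul_mem hMZ hMX) hMZ) hMY) 2

-- ### Auxiliary machinery: signed permutation matrices as a cheap computational model

/-- Signed permutations of `Fin 6` (row picture): `sigma` maps each row to the column of
its nonzero entry, `sign` records whether that entry is `-1`. -/
structure SP where
  sigma : Fin 6 → Fin 6
  sign : Fin 6 → Bool

instance : DecidableEq SP := fun p q =>
  decidable_of_iff ((∀ i, p.sigma i = q.sigma i) ∧ ∀ i, p.sign i = q.sign i)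
    (by cases p; cases q; simp [SP.mk.injEq, funext_iff])

def mulSP (p q : SP) : SP :=
  ⟨fun i => q.sigma (p.sigma i), fun i => xor (p.sign i) (q.sign (p.sigma i))⟩

def oneSP : SP := ⟨id, fun _ => false⟩

instance : Monoid SP where
  mul := mulSP
  one := oneSP
  mul_assoc p q r := by
    show mulSP (mulSP p q) r = mulSP p (mulSP q r)
    unfold mulSP
    refine congrArg₂ SP.mk rfl ?_
    funext i
    exact Bool.xor_assoc _ _ _
  one_mul p := by
    show mulSP oneSP p = p
    unfold mulSP oneSP
    refine congrArg₂ SP.mk rfl ?_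
    funext i
    exact Bool.false_xor _
  mul_one p := by
    show mulSP p oneSP = p
    unfold mulSP oneSP
    refine congrArg₂ SP.mk rfl ?_
    funext i
    exact Bool.xor_false _

/-- The matrix of a signed permutation. -/
def toMat (p : SP) : Matrix (Fin 6) (Fin 6) ℤ :=
  Matrix.of fun i j => if p.sigma i = j then (if p.sign i then -1 else 1) else 0

lemma toMat_one : toMat 1 = (1 : Matrix (Fin 6) (Fin 6) ℤ) := by
  ext i j
  rw [Matrix.one_apply]
  show (if i = j then (if false then (-1:ℤ) else 1) else 0) = _
  by_cases h : i = j <;> simp [h]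

lemma toMat_mul (p q : SP) : toMat (p * q) = toMat p * toMat q := by
  ext i j
  rw [Matrix.mul_apply, Finset.sum_eq_single (p.sigma i)]
  · show (if q.sigma (p.sigma i) = j
          then (if xor (p.sign i) (q.sign (p.sigma i)) then (-1:ℤ) else 1) else 0)
        = (if p.sigma i = p.sigma i then (if p.sign i then (-1:ℤ) else 1) else 0) *
          (if q.sigma (p.sigma i) = j then (if q.sign (p.sigma i) then (-1:ℤ) else 1) else 0)
    rw [if_pos rfl]
    by_cases h : q.sigma (p.sigma i) = j
    · rw [if_pos h, if_pos h]
      cases hp : p.sign i <;> cases hq : q.sign (p.sigma i) <;> simp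
    · rw [if_neg h, if_neg h, mul_zero]
  · intro b _ hb
    show (if p.sigma i = b then (if p.sign i then (-1:ℤ) else 1) else 0) * _ = 0
    rw [if_neg (Ne.symm hb), zero_mul]
  · intro h
    exact absurd (Finset.mem_univ _) h

lemma toMat_list_prod (l : List SP) : toMat l.prod = (l.map toMat).prod := by
  induction l with
  | nil => simpa using toMat_one
  | cons a l ih => simp [toMat_mul, ih]

/-- The three generators as signed permutations. -/
def genP : Fin 3 → SP
  | 0 => ⟨![4, 5, 2, 3, 0, 1], ![true, true, false, true, true, true]⟩
  | 1 => ⟨![3, 1, 5, 0, 4, 2], ![true, false, true, true, true, true]⟩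
  | 2 => ⟨![0, 3, 4, 1, 2, 5], ![false, true, true, true, true, true]⟩

/-- The three generators as elements of `GL(6,ℤ)`. -/
def gen : Fin 3 → GL (Fin 6) ℤ
  | 0 => MX | 1 => MY | 2 => MZ

lemma gen_val (i : Fin 3) : ((gen i : GL (Fin 6) ℤ) : Matrix (Fin 6) (Fin 6) ℤ) = toMat (genP i) := by
  fin_cases i <;> · show (_ : Matrix (Fin 6) (Fin 6) ℤ) = _; decide

def words : List (List (Fin 3)) := [[],
  [0],
  [1],
  [2],
  [1, 0],
  [2, 0],
  [0, 1],
  [2, 1],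
  [0, 2],
  [1, 2],
  [0, 1, 0],
  [2, 1, 0],
  [0, 2, 0],
  [1, 2, 0],
  [2, 0, 1],
  [0, 2, 1],
  [1, 2, 1],
  [1, 0, 2],
  [0, 1, 2],
  [2, 0, 1, 0],
  [0, 2, 1, 0],
  [1, 2, 1, 0],
  [1, 0, 2, 0],
  [0, 1, 2, 0],
  [0, 2, 0, 1],
  [1, 2, 0, 1],
  [1, 0, 2, 1],
  [0, 1, 2, 1],
  [0, 1, 0, 2],
  [2, 1, 0, 2],
  [2, 0, 1, 2],
  [0, 2, 0, 1, 0],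
  [1, 2, 0, 1, 0],
  [1, 0, 2, 1, 0],
  [0, 1, 2, 1, 0],
  [0, 1, 0, 2, 0],
  [2, 1, 0, 2, 0],
  [2, 0, 1, 2, 0],
  [1, 0, 2, 0, 1],
  [0, 1, 2, 0, 1],
  [0, 1, 0, 2, 1],
  [2, 1, 0, 2, 1],
  [2, 0, 1, 2, 1],
  [2, 0, 1, 0, 2],
  [0, 2, 1, 0, 2],
  [1, 2, 0, 1, 2],
  [1, 0, 2, 0, 1, 0],
  [0, 1, 2, 0, 1, 0],
  [0, 1, 0, 2, 1, 0],
  [2, 1, 0, 2, 1, 0],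
  [2, 0, 1, 2, 1, 0],
  [2, 0, 1, 0, 2, 0],
  [0, 2, 1, 0, 2, 0],
  [1, 2, 0, 1, 2, 0],
  [0, 1, 0, 2, 0, 1],
  [2, 1, 0, 2, 0, 1],
  [2, 0, 1, 2, 0, 1],
  [2, 0, 1, 0, 2, 1],
  [0, 2, 1, 0, 2, 1],
  [1, 2, 0, 1, 2, 1],
  [0, 2, 0, 1, 0, 2],
  [1, 2, 0, 1, 0, 2],
  [1, 0, 2, 1, 0, 2],
  [0, 1, 2, 0, 1, 2],
  [0, 1, 0, 2, 0, 1, 0],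
  [2, 1, 0, 2, 0, 1, 0],
  [2, 0, 1, 2, 0, 1, 0],
  [2, 0, 1, 0, 2, 1, 0],
  [0, 2, 1, 0, 2, 1, 0],
  [1, 2, 0, 1, 2, 1, 0],
  [0, 2, 0, 1, 0, 2, 0],
  [1, 2, 0, 1, 0, 2, 0],
  [1, 0, 2, 1, 0, 2, 0],
  [0, 1, 2, 0, 1, 2, 0],
  [2, 0, 1, 0, 2, 0, 1],
  [0, 2, 1, 0, 2, 0, 1],
  [1, 2, 0, 1, 2, 0, 1],
  [0, 2, 0, 1, 0, 2, 1],
  [1, 2, 0, 1, 0, 2, 1],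
  [1, 0, 2, 1, 0, 2, 1],
  [0, 1, 2, 0, 1, 2, 1],
  [1, 0, 2, 0, 1, 0, 2],
  [0, 1, 2, 0, 1, 0, 2],
  [2, 1, 0, 2, 1, 0, 2],
  [2, 0, 1, 2, 0, 1, 2],
  [2, 0, 1, 0, 2, 0, 1, 0],
  [0, 2, 1, 0, 2, 0, 1, 0],
  [1, 2, 0, 1, 2, 0, 1, 0],
  [0, 2, 0, 1, 0, 2, 1, 0],
  [1, 2, 0, 1, 0, 2, 1, 0],
  [1, 0, 2, 1, 0, 2, 1, 0],
  [0, 1, 2, 0, 1, 2, 1, 0],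
  [1, 0, 2, 0, 1, 0, 2, 0],
  [0, 1, 2, 0, 1, 0, 2, 0],
  [2, 1, 0, 2, 1, 0, 2, 0],
  [2, 0, 1, 2, 0, 1, 2, 0]]

/-- The 96 group elements as signed permutations. -/
def LP : List SP := words.map (fun w => (w.map genP).prod)

/-- The 96 group elements as matrices. -/
def Lm : List (Matrix (Fin 6) (Fin 6) ℤ) := LP.map toMat

set_option maxRecDepth 100000 in
set_option maxHeartbeats 2000000 in
lemma hLPnodup : Lm.Nodup := by decide

set_option maxRecDepth 100000 in
set_option maxHeartbeats 2000000 in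
lemma hLPone' : ∃ q ∈ LP, (1 : SP) = q := by decide

lemma hLPone : (1 : SP) ∈ LP := by
  obtain ⟨q, hq, h⟩ := hLPone'
  rw [h]; exact hq

set_option maxRecDepth 100000 in
set_option maxHeartbeats 2000000 in
lemma hLPclosed' : ∀ i : Fin 3, ∀ p ∈ LP, ∃ q ∈ LP, genP i * p = q := by decide

lemma hLPclosed : ∀ i : Fin 3, ∀ p ∈ LP, genP i * p ∈ LP := by
  intro i p hp
  obtain ⟨q, hq, h⟩ := hLPclosed' i p hp
  rw [h]; exact hq

lemma hone_mem : (1 : Matrix (Fin 6) (Fin 6) ℤ) ∈ Lm := by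
  rw [← toMat_one]; exact List.mem_map_of_mem (f := toMat) hLPone

lemma hgen_closed (i : Fin 3) : ∀ A ∈ Lm, toMat (genP i) * A ∈ Lm := by
  intro A hA
  obtain ⟨p, hp, rfl⟩ := List.mem_map.1 hA
  rw [← toMat_mul]
  exact List.mem_map_of_mem (f := toMat) (hLPclosed i p hp)

/-- Every element of `G` has its matrix in `Lm`. -/
lemma mem_Lm_of_mem_G : ∀ g : GL (Fin 6) ℤ, g ∈ G → (g : Matrix (Fin 6) (Fin 6) ℤ) ∈ Lm := by
  have key : ∀ g : GL (Fin 6) ℤ, g ∈ G →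
      ∀ A ∈ Lm, (g : Matrix (Fin 6) (Fin 6) ℤ) * A ∈ Lm := by
    intro g hg
    refine Subgroup.closure_induction ?_ ?_ ?_ ?_ hg
    · intro x hx
      rcases hx with h | h | h
      · subst h; intro A hA; have := hgen_closed 0 A hA; rw [← gen_val 0] at this; exact this
      · subst h; intro A hA; have := hgen_closed 1 A hA; rw [← gen_val 1] at this; exact this
      · subst h; intro A hA; have := hgen_closed 2 A hA; rw [← gen_val 2] at this; exact this
    · intro A hA; simpa using hA
    · intro x y _ _ hx hy A hA
      have := hx _ (hy A hA)
      simpa [mul_assoc] using this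
    · intro x _ hx A hA
      -- left multiplication by `x` is an injection of the finite set `Lm.toFinset` into itself,
      -- hence a surjection; so `A = x * B` for some `B ∈ Lm`, and then `x⁻¹ * A = B`.
      set F := Lm.toFinset with hF
      have hmaps : ∀ B ∈ F, (x : Matrix (Fin 6) (Fin 6) ℤ) * B ∈ F := by
        intro B hB
        exact List.mem_toFinset.2 (hx B (List.mem_toFinset.1 hB))
      have hinj : Set.InjOn (fun B => (x : Matrix (Fin 6) (Fin 6) ℤ) * B) F := by
        intro B hB C hC hBC
        have := congrArg (fun M => ((x⁻¹ : GL (Fin 6) ℤ) : Matrix (Fin 6) (Fin 6) ℤ) * M) hBC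
        simpa [← Matrix.mul_assoc, ← Units.val_mul] using this
      have himage : F.image (fun B => (x : Matrix (Fin 6) (Fin 6) ℤ) * B) = F := by
        apply Finset.eq_of_subset_of_card_le
        · intro B hB
          obtain ⟨C, hC, rfl⟩ := Finset.mem_image.1 hB
          exact hmaps C hC
        · rw [Finset.card_image_of_injOn hinj]
      have hAF : A ∈ F := List.mem_toFinset.2 hA
      rw [← himage] at hAF
      obtain ⟨B, hB, hxB⟩ := Finset.mem_image.1 hAF
      have : ((x⁻¹ : GL (Fin 6) ℤ) : Matrix (Fin 6) (Fin 6) ℤ) * A = B := by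
        rw [← hxB]
        simp [← Matrix.mul_assoc, ← Units.val_mul]
      rw [this]
      exact List.mem_toFinset.1 hB
  intro g hg
  simpa using key g hg 1 hone_mem

/-- Conversely, every matrix in `Lm` is the matrix of an element of `G`. -/
lemma exists_mem_G_of_mem_Lm : ∀ A ∈ Lm, ∃ g : GL (Fin 6) ℤ, g ∈ G ∧
    (g : Matrix (Fin 6) (Fin 6) ℤ) = A := by
  intro A hA
  obtain ⟨p, hp, rfl⟩ := List.mem_map.1 hA
  obtain ⟨w, _, rfl⟩ := List.mem_map.1 hp
  refine ⟨(w.map gen).prod, ?_, ?_⟩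
  · refine Subgroup.list_prod_mem _ ?_
    intro x hx
    obtain ⟨i, _, rfl⟩ := List.mem_map.1 hx
    fin_cases i
    · exact hMX
    · exact hMY
    · exact hMZ
  · have : ((w.map gen).prod : Matrix (Fin 6) (Fin 6) ℤ)
        = ((w.map gen).map (Units.val)).prod := by
      exact map_list_prod (Units.coeHom (Matrix (Fin 6) (Fin 6) ℤ)) _
    rw [this, toMat_list_prod, List.map_map, List.map_map]
    congr 1
    apply List.map_congr_left
    intro i _
    exact gen_val i

/-- The duality group `DF₃` of triple vector bundles, modelled faithfully as the subgroup `G`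
of `GL(6,ℤ)` generated by `M_X, M_Y, M_Z`, is a finite group of order exactly 96. -/
theorem stmt_0 : Finite G ∧ Nat.card G = 96 := by
  have e : G ≃ {A : Matrix (Fin 6) (Fin 6) ℤ // A ∈ Lm.toFinset} := by
    refine Equiv.ofBijective
      (fun g => ⟨(g.1 : Matrix (Fin 6) (Fin 6) ℤ),
        List.mem_toFinset.2 (mem_Lm_of_mem_G g.1 g.2)⟩) ⟨?_, ?_⟩
    · intro g h hgh
      exact Subtype.ext (Units.ext (congrArg Subtype.val hgh))
    · rintro ⟨A, hA⟩
      obtain ⟨g, hg, hval⟩ := exists_mem_G_of_mem_Lm A (List.mem_toFinset.1 hA)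
      exact ⟨⟨g, hg⟩, Subtype.ext hval⟩
  constructor
  · exact Finite.of_equiv _ e.symm
  · rw [Nat.card_congr e, Nat.card_eq_fintype_card, Fintype.card_coe,
      List.toFinset_card_of_nodup hLPnodup]
    rfl
end

section
/- The matrices M_X, M_Y, M_Z satisfy the Coxeter-type relations M_X² = M_Y² = M_Z² = 1 and (M_X M_Y)³ = (M_Y M_Z)³ = (M_Z M_X)³ = 1 in GL(6,ℤ). (These encode that the words X², Y², Z², (XY)³, (YZ)³, (ZX)³ are trivial in the duality group DF₃.) -/
open Matrix

/-- The generators satisfy the Coxeter-type relations `M_X² = M_Y² = M_Z² = 1` and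
`(M_X M_Y)³ = (M_Y M_Z)³ = (M_Z M_X)³ = 1` in `GL(6,ℤ)`. -/
theorem stmt_1 :
    MX ^ 2 = 1 ∧ MY ^ 2 = 1 ∧ MZ ^ 2 = 1 ∧
    (MX * MY) ^ 3 = 1 ∧ (MY * MZ) ^ 3 = 1 ∧ (MZ * MX) ^ 3 = 1 := by
  refine ⟨?_,?_,?_,?_,?_,?_⟩ <;>
    (refine Units.ext ?_; show _ = (1 : Matrix (Fin 6) (Fin 6) ℤ);
     simp only [Units.val_pow_eq_pow_val, Units.val_mul, MX, MY, MZ]; decide)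
end

section
/- The subgroup of GL(6,ℤ) generated by M_X and M_Y has order 6 and is isomorphic to the symmetric group on 3 letters. (This realizes the duality group DF₂ ≅ S₃ of double vector bundles as a subgroup of the triple duality group.) -/
open Matrix

def fperm : Equiv.Perm (Fin 3) → GL (Fin 6) ℤ := fun σ =>
  if σ = 1 then 1
  else if σ = Equiv.swap 0 1 then MX
  else if σ = Equiv.swap 1 2 then MY
  else if σ = Equiv.swap 0 2 then MX * MY * MX
  else if σ = Equiv.swap 0 1 * Equiv.swap 1 2 then MX * MY
  else MY * MX

lemma fperm_mul_val : ∀ σ τ : Equiv.Perm (Fin 3),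
    (fperm (σ * τ)).val = (fperm σ).val * (fperm τ).val := by decide

def fhom : Equiv.Perm (Fin 3) →* GL (Fin 6) ℤ where
  toFun := fperm
  map_one' := rfl
  map_mul' σ τ := Units.ext (fperm_mul_val σ τ)

lemma fhom_inj : Function.Injective fhom := fun σ τ h =>
  (by decide : ∀ σ τ : Equiv.Perm (Fin 3), (fperm σ).val = (fperm τ).val → σ = τ)
    σ τ (congrArg Units.val h)

lemma range_eq : fhom.range = Subgroup.closure {MX, MY} := by
  apply le_antisymm
  · rintro x ⟨σ, rfl⟩
    show fperm σ ∈ _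
    have hX : MX ∈ Subgroup.closure {MX, MY} := Subgroup.subset_closure (by simp)
    have hY : MY ∈ Subgroup.closure {MX, MY} := Subgroup.subset_closure (by simp)
    unfold fperm
    split_ifs
    · exact one_mem _
    · exact hX
    · exact hY
    · exact mul_mem (mul_mem hX hY) hX
    · exact mul_mem hX hY
    · exact mul_mem hY hX
  · rw [Subgroup.closure_le]
    rintro x (rfl | rfl)
    · exact ⟨Equiv.swap 0 1, Units.ext (by decide)⟩
    · exact ⟨Equiv.swap 1 2, Units.ext (by decide)⟩

/-- The subgroup of `GL(6,ℤ)` generated by `M_X` and `M_Y` has order 6 and is isomorphic to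
the symmetric group on three letters. -/
theorem stmt_2 :
    Nat.card (Subgroup.closure {MX, MY} : Subgroup (GL (Fin 6) ℤ)) = 6 ∧
    Nonempty ((Subgroup.closure {MX, MY} : Subgroup (GL (Fin 6) ℤ)) ≃* Equiv.Perm (Fin 3)) := by
  have e : Equiv.Perm (Fin 3) ≃* fhom.range := MonoidHom.ofInjective fhom_inj
  rw [← range_eq]
  refine ⟨?_, ⟨(e.symm)⟩⟩
  rw [← Nat.card_congr e.toEquiv]
  simp [Nat.card_eq_fintype_card, Fintype.card_perm, Nat.factorial]
end

section
/- The elements g₁ = (M_X M_Y M_X M_Z)², g₂ = (M_Y M_Z M_Y M_X)², g₃ = (M_Z M_X M_Z M_Y)² of G each have order 2, commute pairwise, and satisfy g₂ · g₁ = g₃; consequently {1, g₁, g₂, g₃} is a subgroup of G isomorphic to the Klein four-group ℤ/2 × ℤ/2. (This is the paper's Proposition that the words (XYXZ)², (YZYX)², (ZXZY)² have order 2 in DF₃ and (YZYX)²(XYXZ)² = (ZXZY)².) -/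
open Matrix

-- Auxiliary facts, all verified by decidable computation on 6×6 integer matrices.
lemma sq₁ : g₁ * g₁ = 1 := by decide
lemma sq₂ : g₂ * g₂ = 1 := by decide
lemma sq₃ : g₃ * g₃ = 1 := by decide
lemma ne₁ : g₁ ≠ 1 := by decide
lemma ne₂ : g₂ ≠ 1 := by decide
lemma ne₃ : g₃ ≠ 1 := by decide
lemma ne₁₂ : g₁ ≠ g₂ := by decide
lemma ne₁₃ : g₁ ≠ g₃ := by decide
lemma ne₂₃ : g₂ ≠ g₃ := by decide
lemma m₂₁ : g₂ * g₁ = g₃ := by decide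
lemma m₁₂ : g₁ * g₂ = g₃ := by decide
lemma m₁₃ : g₁ * g₃ = g₂ := by decide
lemma m₃₁ : g₃ * g₁ = g₂ := by decide
lemma m₂₃ : g₂ * g₃ = g₁ := by decide
lemma m₃₂ : g₃ * g₂ = g₁ := by decide

/-- The Klein four subgroup `{1, g₁, g₂, g₃}`. -/
def K : Subgroup (GL (Fin 6) ℤ) where
  carrier := {1, g₁, g₂, g₃}
  one_mem' := Or.inl rfl
  inv_mem' := by
    rintro x (rfl | rfl | rfl | rfl)
    · exact Or.inl inv_one
    · exact Or.inr (Or.inl (by rw [inv_eq_iff_mul_eq_one, sq₁]))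
    · exact Or.inr (Or.inr (Or.inl (by rw [inv_eq_iff_mul_eq_one, sq₂])))
    · exact Or.inr (Or.inr (Or.inr (show g₃⁻¹ = g₃ by rw [inv_eq_iff_mul_eq_one, sq₃])))
  mul_mem' := by
    rintro x y (rfl | rfl | rfl | rfl) (rfl | rfl | rfl | rfl)
    · exact Or.inl (one_mul 1)
    · exact Or.inr (Or.inl (one_mul g₁))
    · exact Or.inr (Or.inr (Or.inl (one_mul g₂)))
    · exact Or.inr (Or.inr (Or.inr (one_mul g₃)))
    · exact Or.inr (Or.inl (mul_one g₁))
    · exact Or.inl sq₁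
    · exact Or.inr (Or.inr (Or.inr m₁₂))
    · exact Or.inr (Or.inr (Or.inl m₁₃))
    · exact Or.inr (Or.inr (Or.inl (mul_one g₂)))
    · exact Or.inr (Or.inr (Or.inr m₂₁))
    · exact Or.inl sq₂
    · exact Or.inr (Or.inl m₂₃)
    · exact Or.inr (Or.inr (Or.inr (mul_one g₃)))
    · exact Or.inr (Or.inr (Or.inl m₃₁))
    · exact Or.inr (Or.inl m₃₂)
    · exact Or.inl sq₃

lemma closure_eq_K : Subgroup.closure {g₁, g₂, g₃} = K := by
  apply le_antisymm
  · rw [Subgroup.closure_le]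
    rintro x (rfl | rfl | rfl)
    · exact Or.inr (Or.inl rfl)
    · exact Or.inr (Or.inr (Or.inl rfl))
    · exact Or.inr (Or.inr (Or.inr rfl))
  · rintro x (rfl | rfl | rfl | rfl)
    · exact Subgroup.one_mem _
    · exact Subgroup.subset_closure (Or.inl rfl)
    · exact Subgroup.subset_closure (Or.inr (Or.inl rfl))
    · exact Subgroup.subset_closure (Or.inr (Or.inr rfl))

lemma orderOf_g₁ : orderOf g₁ = 2 :=
  orderOf_eq_prime (by rw [pow_two, sq₁]) ne₁
lemma orderOf_g₂ : orderOf g₂ = 2 :=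
  orderOf_eq_prime (by rw [pow_two, sq₂]) ne₂
lemma orderOf_g₃ : orderOf g₃ = 2 :=
  orderOf_eq_prime (by rw [pow_two, sq₃]) ne₃

lemma card_K : Nat.card K = 4 := by
  have : (K : Set (GL (Fin 6) ℤ)) = {1, g₁, g₂, g₃} := rfl
  rw [← SetLike.coe_sort_coe, this, Nat.card_coe_set_eq]
  rw [Set.ncard_insert_of_notMem (by simp [ne₁.symm, ne₂.symm, ne₃.symm]),
      Set.ncard_insert_of_notMem (by simp [ne₁₂, ne₁₃]),
      Set.ncard_insert_of_notMem (by simp [ne₂₃]),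
      Set.ncard_singleton]

lemma exponent_K : Monoid.exponent K = 2 := by
  have h2 : Monoid.exponent K ∣ 2 := by
    apply Monoid.exponent_dvd_of_forall_pow_eq_one
    rintro ⟨x, hx⟩
    have hx' : x = 1 ∨ x = g₁ ∨ x = g₂ ∨ x = g₃ := hx
    apply Subtype.ext
    push_cast
    rcases hx' with rfl | rfl | rfl | rfl
    · simp
    · rw [pow_two, sq₁]
    · rw [pow_two, sq₂]
    · rw [pow_two, sq₃]
  have h1 : 2 ∣ Monoid.exponent K := by
    have := Monoid.order_dvd_exponent (⟨g₁, Or.inr (Or.inl rfl)⟩ : K)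
    rwa [← Subgroup.orderOf_coe, orderOf_g₁] at this
  exact Nat.dvd_antisymm h2 h1

instance : IsKleinFour K := ⟨card_K, exponent_K⟩


/-- The elements `g₁ = (M_X M_Y M_X M_Z)²`, `g₂ = (M_Y M_Z M_Y M_X)²`, `g₃ = (M_Z M_X M_Z M_Y)²`
each have order 2, commute pairwise, and satisfy `g₂ * g₁ = g₃`; consequently
`{1, g₁, g₂, g₃}` is a subgroup of `G` isomorphic to the Klein four-group `ℤ/2 × ℤ/2`. -/
theorem stmt_3 :
    orderOf g₁ = 2 ∧ orderOf g₂ = 2 ∧ orderOf g₃ = 2 ∧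
    Commute g₁ g₂ ∧ Commute g₁ g₃ ∧ Commute g₂ g₃ ∧
    g₂ * g₁ = g₃ ∧
    ((Subgroup.closure {g₁, g₂, g₃} : Subgroup (GL (Fin 6) ℤ)) : Set (GL (Fin 6) ℤ))
      = {1, g₁, g₂, g₃} ∧
    Subgroup.closure {g₁, g₂, g₃} ≤ G ∧
    Nonempty ((Subgroup.closure {g₁, g₂, g₃} : Subgroup (GL (Fin 6) ℤ)) ≃* (Multiplicative (ZMod 2) × Multiplicative (ZMod 2))) := by
  refine ⟨orderOf_g₁, orderOf_g₂, orderOf_g₃, ?_, ?_, ?_, m₂₁, ?_, ?_, ?_⟩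
  · show g₁ * g₂ = g₂ * g₁; rw [m₁₂, m₂₁]
  · show g₁ * g₃ = g₃ * g₁; rw [m₁₃, m₃₁]
  · show g₂ * g₃ = g₃ * g₂; rw [m₂₃, m₃₂]
  · rw [closure_eq_K]; rfl
  · rw [closure_eq_K]
    rintro x (rfl | rfl | rfl | rfl)
    · exact Subgroup.one_mem _
    · exact hg₁
    · exact hg₂
    · exact hg₃
  · rw [closure_eq_K]
    obtain ⟨e⟩ := IsKleinFour.nonempty_mulEquiv (G₁ := K)
      (G₂ := Multiplicative (ZMod 2 × ZMod 2))
    exact ⟨e.trans (MulEquiv.prodMultiplicative (ZMod 2) (ZMod 2))⟩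
end

section
/- The conjugation relations M_X g₁ M_X⁻¹ = g₃⁻¹, M_Y g₁ M_Y⁻¹ = g₂⁻¹, and M_Z g₁ M_Z⁻¹ = g₁⁻¹ hold in GL(6,ℤ); consequently the subgroup of G generated by g₁, g₂, g₃ is a normal subgroup of G. -/
open Matrix

/-- The subgroup generated by `g₁, g₂, g₃`. -/
def Hsub : Subgroup (GL (Fin 6) ℤ) := Subgroup.closure {g₁, g₂, g₃}

lemma hg1H : g₁ ∈ Hsub := Subgroup.subset_closure (by simp)
lemma hg2H : g₂ ∈ Hsub := Subgroup.subset_closure (by simp)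
lemma hg3H : g₃ ∈ Hsub := Subgroup.subset_closure (by simp)

lemma conj_closure_mem {M : GL (Fin 6) ℤ}
    (h1 : M * g₁ * M⁻¹ ∈ Hsub) (h2 : M * g₂ * M⁻¹ ∈ Hsub) (h3 : M * g₃ * M⁻¹ ∈ Hsub) :
    ∀ {h : GL (Fin 6) ℤ}, h ∈ Hsub → M * h * M⁻¹ ∈ Hsub := by
  intro h hh
  induction hh using Subgroup.closure_induction with
  | mem x hx =>
    rcases hx with rfl | rfl | rfl
    · exact h1
    · exact h2
    · exact h3
  | one => simpa using Hsub.one_mem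
  | mul x y hx hy px py =>
    have e : M * (x * y) * M⁻¹ = (M * x * M⁻¹) * (M * y * M⁻¹) := by group
    rw [e]; exact Hsub.mul_mem px py
  | inv x hx px =>
    have e : M * x⁻¹ * M⁻¹ = (M * x * M⁻¹)⁻¹ := by group
    rw [e]; exact Hsub.inv_mem px

lemma invMX : MX⁻¹ = MX := Units.ext rfl
lemma invMY : MY⁻¹ = MY := Units.ext rfl
lemma invMZ : MZ⁻¹ = MZ := Units.ext rfl

/-- Conjugation relations `M_X g₁ M_X⁻¹ = g₃⁻¹`, `M_Y g₁ M_Y⁻¹ = g₂⁻¹`, `M_Z g₁ M_Z⁻¹ = g₁⁻¹`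
hold in `GL(6,ℤ)`; consequently the subgroup of `G` generated by `g₁, g₂, g₃` is a normal
subgroup of `G`. -/
theorem stmt_5 :
    MX * g₁ * MX⁻¹ = g₃⁻¹ ∧ MY * g₁ * MY⁻¹ = g₂⁻¹ ∧ MZ * g₁ * MZ⁻¹ = g₁⁻¹ ∧
    ((Subgroup.closure {g₁, g₂, g₃}).subgroupOf G).Normal := by
  have cX1 : MX * g₁ * MX⁻¹ = g₃⁻¹ := Units.ext (by decide)
  have cX2 : MX * g₂ * MX⁻¹ = g₂⁻¹ := Units.ext (by decide)
  have cX3 : MX * g₃ * MX⁻¹ = g₁⁻¹ := Units.ext (by decide)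
  have cY1 : MY * g₁ * MY⁻¹ = g₂⁻¹ := Units.ext (by decide)
  have cY2 : MY * g₂ * MY⁻¹ = g₁⁻¹ := Units.ext (by decide)
  have cY3 : MY * g₃ * MY⁻¹ = g₃⁻¹ := Units.ext (by decide)
  have cZ1 : MZ * g₁ * MZ⁻¹ = g₁⁻¹ := Units.ext (by decide)
  have cZ2 : MZ * g₂ * MZ⁻¹ = g₃⁻¹ := Units.ext (by decide)
  have cZ3 : MZ * g₃ * MZ⁻¹ = g₂⁻¹ := Units.ext (by decide)
  refine ⟨cX1, cY1, cZ1, ?_⟩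
  have hHG : Hsub ≤ G := by
    rw [Hsub, Subgroup.closure_le]
    rintro x (rfl | rfl | rfl)
    exacts [hg₁, hg₂, hg₃]
  have cMX : ∀ {h : GL (Fin 6) ℤ}, h ∈ Hsub → MX * h * MX⁻¹ ∈ Hsub :=
    conj_closure_mem (cX1 ▸ Hsub.inv_mem hg3H) (cX2 ▸ Hsub.inv_mem hg2H)
      (cX3 ▸ Hsub.inv_mem hg1H)
  have cMY : ∀ {h : GL (Fin 6) ℤ}, h ∈ Hsub → MY * h * MY⁻¹ ∈ Hsub :=
    conj_closure_mem (cY1 ▸ Hsub.inv_mem hg2H) (cY2 ▸ Hsub.inv_mem hg1H)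
      (cY3 ▸ Hsub.inv_mem hg3H)
  have cMZ : ∀ {h : GL (Fin 6) ℤ}, h ∈ Hsub → MZ * h * MZ⁻¹ ∈ Hsub :=
    conj_closure_mem (cZ1 ▸ Hsub.inv_mem hg1H) (cZ2 ▸ Hsub.inv_mem hg3H)
      (cZ3 ▸ Hsub.inv_mem hg2H)
  rw [show (Subgroup.closure {g₁, g₂, g₃} : Subgroup (GL (Fin 6) ℤ)) = Hsub from rfl,
    Subgroup.normal_subgroupOf_iff hHG]
  intro h k hh hk
  revert h
  have key : ∀ h ∈ Hsub, (k * h * k⁻¹ ∈ Hsub ∧ k⁻¹ * h * k ∈ Hsub) := by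
    induction hk using Subgroup.closure_induction with
    | mem x hx =>
      intro h hh
      rcases hx with rfl | rfl | rfl
      · exact ⟨cMX hh, by rw [invMX]; exact (invMX ▸ cMX hh)⟩
      · exact ⟨cMY hh, by rw [invMY]; exact (invMY ▸ cMY hh)⟩
      · exact ⟨cMZ hh, by rw [invMZ]; exact (invMZ ▸ cMZ hh)⟩
    | one => intro h hh; constructor <;> simpa using hh
    | mul x y hx hy px py =>
      intro h hh
      constructor
      · have e : x * y * h * (x * y)⁻¹ = x * (y * h * y⁻¹) * x⁻¹ := by group
        rw [e]; exact (px _ ((py h hh).1)).1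
      · have e : (x * y)⁻¹ * h * (x * y) = y⁻¹ * (x⁻¹ * h * x) * y := by group
        rw [e]; exact (py _ ((px h hh).2)).2
    | inv x hx px =>
      intro h hh
      refine ⟨(px h hh).2, ?_⟩
      have e : x⁻¹⁻¹ * h * x⁻¹ = x * h * x⁻¹ := by group
      rw [e]; exact (px h hh).1
  exact fun h hh => (key h hh).1
end

section
/- The extension 1 → K₄ → G → S₄ → 1 is not split: there is no group homomorphism s : Perm({0,1,2,3}) → G with π ∘ s equal to the identity on Perm({0,1,2,3}). -/
open Matrix

def e0 : Matrix (Fin 6) (Fin 6) ℤ × Equiv.Perm (Fin 4) := (!![1,0,0,0,0,0; 0,1,0,0,0,0; 0,0,1,0,0,0; 0,0,0,1,0,0; 0,0,0,0,1,0; 0,0,0,0,0,1], (1 : Equiv.Perm (Fin 4)))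
def e1 : Matrix (Fin 6) (Fin 6) ℤ × Equiv.Perm (Fin 4) := (!![0,0,0,0,-1,0; 0,0,0,0,0,-1; 0,0,1,0,0,0; 0,0,0,-1,0,0; -1,0,0,0,0,0; 0,-1,0,0,0,0], (Equiv.swap 0 1))
def e2 : Matrix (Fin 6) (Fin 6) ℤ × Equiv.Perm (Fin 4) := (!![0,0,0,-1,0,0; 0,1,0,0,0,0; 0,0,0,0,0,-1; -1,0,0,0,0,0; 0,0,0,0,-1,0; 0,0,-1,0,0,0], (Equiv.swap 0 2))
def e3 : Matrix (Fin 6) (Fin 6) ℤ × Equiv.Perm (Fin 4) := (!![1,0,0,0,0,0; 0,0,0,-1,0,0; 0,0,0,0,-1,0; 0,-1,0,0,0,0; 0,0,-1,0,0,0; 0,0,0,0,0,-1], (Equiv.swap 0 3))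
def e4 : Matrix (Fin 6) (Fin 6) ℤ × Equiv.Perm (Fin 4) := (!![0,0,0,0,1,0; 0,0,1,0,0,0; 0,0,0,0,0,-1; 1,0,0,0,0,0; 0,0,0,1,0,0; 0,-1,0,0,0,0], (Equiv.swap 0 1 * Equiv.swap 0 2))
def e5 : Matrix (Fin 6) (Fin 6) ℤ × Equiv.Perm (Fin 4) := (!![0,0,1,0,0,0; 0,0,0,0,0,1; 0,0,0,0,-1,0; 0,1,0,0,0,0; -1,0,0,0,0,0; 0,0,0,1,0,0], (Equiv.swap 0 1 * Equiv.swap 0 3))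
def e6 : Matrix (Fin 6) (Fin 6) ℤ × Equiv.Perm (Fin 4) := (!![0,0,0,1,0,0; 0,0,0,0,0,-1; 0,1,0,0,0,0; 0,0,0,0,1,0; 1,0,0,0,0,0; 0,0,-1,0,0,0], (Equiv.swap 0 2 * Equiv.swap 0 1))
def e7 : Matrix (Fin 6) (Fin 6) ℤ × Equiv.Perm (Fin 4) := (!![0,1,0,0,0,0; 0,0,0,-1,0,0; 0,0,0,0,0,1; -1,0,0,0,0,0; 0,0,1,0,0,0; 0,0,0,0,1,0], (Equiv.swap 0 2 * Equiv.swap 0 3))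
def e8 : Matrix (Fin 6) (Fin 6) ℤ × Equiv.Perm (Fin 4) := (!![0,0,0,0,-1,0; 0,0,0,1,0,0; 1,0,0,0,0,0; 0,0,0,0,0,1; 0,0,-1,0,0,0; 0,1,0,0,0,0], (Equiv.swap 0 3 * Equiv.swap 0 1))
def e9 : Matrix (Fin 6) (Fin 6) ℤ × Equiv.Perm (Fin 4) := (!![0,0,0,-1,0,0; 1,0,0,0,0,0; 0,0,0,0,1,0; 0,-1,0,0,0,0; 0,0,0,0,0,1; 0,0,1,0,0,0], (Equiv.swap 0 3 * Equiv.swap 0 2))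
def e10 : Matrix (Fin 6) (Fin 6) ℤ × Equiv.Perm (Fin 4) := (!![-1,0,0,0,0,0; 0,0,1,0,0,0; 0,1,0,0,0,0; 0,0,0,0,-1,0; 0,0,0,-1,0,0; 0,0,0,0,0,1], (Equiv.swap 0 1 * Equiv.swap 0 2 * Equiv.swap 0 1))
def e11 : Matrix (Fin 6) (Fin 6) ℤ × Equiv.Perm (Fin 4) := (!![0,0,-1,0,0,0; 0,0,0,0,-1,0; 0,0,0,0,0,1; 1,0,0,0,0,0; 0,-1,0,0,0,0; 0,0,0,1,0,0], (Equiv.swap 0 1 * Equiv.swap 0 2 * Equiv.swap 0 3))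
def e12 : Matrix (Fin 6) (Fin 6) ℤ × Equiv.Perm (Fin 4) := (!![0,0,1,0,0,0; 0,-1,0,0,0,0; 1,0,0,0,0,0; 0,0,0,0,0,-1; 0,0,0,0,1,0; 0,0,0,-1,0,0], (Equiv.swap 0 1 * Equiv.swap 0 3 * Equiv.swap 0 1))
def e13 : Matrix (Fin 6) (Fin 6) ℤ × Equiv.Perm (Fin 4) := (!![0,0,0,0,0,-1; 0,0,-1,0,0,0; 0,0,0,0,1,0; 0,1,0,0,0,0; 0,0,0,1,0,0; -1,0,0,0,0,0], (Equiv.swap 0 1 * Equiv.swap 0 3 * Equiv.swap 0 2))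
def e14 : Matrix (Fin 6) (Fin 6) ℤ × Equiv.Perm (Fin 4) := (!![0,-1,0,0,0,0; 0,0,0,0,0,1; 0,0,0,-1,0,0; 0,0,-1,0,0,0; 1,0,0,0,0,0; 0,0,0,0,1,0], (Equiv.swap 0 2 * Equiv.swap 0 1 * Equiv.swap 0 3))
def e15 : Matrix (Fin 6) (Fin 6) ℤ × Equiv.Perm (Fin 4) := (!![0,0,0,0,0,-1; 0,0,0,1,0,0; 0,-1,0,0,0,0; 0,0,0,0,1,0; 0,0,1,0,0,0; -1,0,0,0,0,0], (Equiv.swap 0 2 * Equiv.swap 0 3 * Equiv.swap 0 1))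
def e16 : Matrix (Fin 6) (Fin 6) ℤ × Equiv.Perm (Fin 4) := (!![0,1,0,0,0,0; 1,0,0,0,0,0; 0,0,-1,0,0,0; 0,0,0,1,0,0; 0,0,0,0,0,-1; 0,0,0,0,-1,0], (Equiv.swap 0 2 * Equiv.swap 0 3 * Equiv.swap 0 2))
def e17 : Matrix (Fin 6) (Fin 6) ℤ × Equiv.Perm (Fin 4) := (!![0,0,0,0,1,0; -1,0,0,0,0,0; 0,0,0,-1,0,0; 0,0,-1,0,0,0; 0,0,0,0,0,1; 0,1,0,0,0,0], (Equiv.swap 0 3 * Equiv.swap 0 1 * Equiv.swap 0 2))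
def e18 : Matrix (Fin 6) (Fin 6) ℤ × Equiv.Perm (Fin 4) := (!![0,0,0,1,0,0; 0,0,0,0,-1,0; -1,0,0,0,0,0; 0,0,0,0,0,1; 0,-1,0,0,0,0; 0,0,1,0,0,0], (Equiv.swap 0 3 * Equiv.swap 0 2 * Equiv.swap 0 1))
def e19 : Matrix (Fin 6) (Fin 6) ℤ × Equiv.Perm (Fin 4) := (!![-1,0,0,0,0,0; 0,0,0,0,-1,0; 0,0,0,-1,0,0; 0,0,1,0,0,0; 0,1,0,0,0,0; 0,0,0,0,0,-1], (Equiv.swap 0 1 * Equiv.swap 0 2 * Equiv.swap 0 1 * Equiv.swap 0 3))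
def e20 : Matrix (Fin 6) (Fin 6) ℤ × Equiv.Perm (Fin 4) := (!![0,0,-1,0,0,0; 1,0,0,0,0,0; 0,-1,0,0,0,0; 0,0,0,0,-1,0; 0,0,0,0,0,1; 0,0,0,-1,0,0], (Equiv.swap 0 1 * Equiv.swap 0 2 * Equiv.swap 0 3 * Equiv.swap 0 1))
def e21 : Matrix (Fin 6) (Fin 6) ℤ × Equiv.Perm (Fin 4) := (!![0,0,0,0,0,1; 0,0,0,0,1,0; 0,0,-1,0,0,0; 0,0,0,-1,0,0; 0,-1,0,0,0,0; -1,0,0,0,0,0], (Equiv.swap 0 1 * Equiv.swap 0 2 * Equiv.swap 0 3 * Equiv.swap 0 2))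
def e22 : Matrix (Fin 6) (Fin 6) ℤ × Equiv.Perm (Fin 4) := (!![0,0,0,0,0,-1; 0,-1,0,0,0,0; 0,0,0,-1,0,0; 0,0,1,0,0,0; 0,0,0,0,-1,0; 1,0,0,0,0,0], (Equiv.swap 0 1 * Equiv.swap 0 3 * Equiv.swap 0 1 * Equiv.swap 0 2))
def e23 : Matrix (Fin 6) (Fin 6) ℤ × Equiv.Perm (Fin 4) := (!![0,1,0,0,0,0; 0,0,-1,0,0,0; -1,0,0,0,0,0; 0,0,0,0,0,-1; 0,0,0,-1,0,0; 0,0,0,0,1,0], (Equiv.swap 0 1 * Equiv.swap 0 3 * Equiv.swap 0 2 * Equiv.swap 0 1))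
def e24 : Matrix (Fin 6) (Fin 6) ℤ × Equiv.Perm (Fin 4) := (!![0,0,0,0,0,1; 0,-1,0,0,0,0; 0,0,0,1,0,0; 0,0,-1,0,0,0; 0,0,0,0,-1,0; -1,0,0,0,0,0], (Equiv.swap 0 2 * Equiv.swap 0 1 * Equiv.swap 0 3 * Equiv.swap 0 1))
def e25 : Matrix (Fin 6) (Fin 6) ℤ × Equiv.Perm (Fin 4) := (!![0,-1,0,0,0,0; 0,0,-1,0,0,0; 1,0,0,0,0,0; 0,0,0,0,0,1; 0,0,0,-1,0,0; 0,0,0,0,-1,0], (Equiv.swap 0 2 * Equiv.swap 0 1 * Equiv.swap 0 3 * Equiv.swap 0 2))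
def e26 : Matrix (Fin 6) (Fin 6) ℤ × Equiv.Perm (Fin 4) := (!![0,0,1,0,0,0; -1,0,0,0,0,0; 0,-1,0,0,0,0; 0,0,0,0,-1,0; 0,0,0,0,0,-1; 0,0,0,1,0,0], (Equiv.swap 0 2 * Equiv.swap 0 3 * Equiv.swap 0 1 * Equiv.swap 0 2))
def e27 : Matrix (Fin 6) (Fin 6) ℤ × Equiv.Perm (Fin 4) := (!![0,0,0,0,0,-1; 0,0,0,0,-1,0; 0,0,-1,0,0,0; 0,0,0,-1,0,0; 0,1,0,0,0,0; 1,0,0,0,0,0], (Equiv.swap 0 2 * Equiv.swap 0 3 * Equiv.swap 0 2 * Equiv.swap 0 1))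
def e28 : Matrix (Fin 6) (Fin 6) ℤ × Equiv.Perm (Fin 4) := (!![-1,0,0,0,0,0; 0,0,0,0,1,0; 0,0,0,1,0,0; 0,0,-1,0,0,0; 0,-1,0,0,0,0; 0,0,0,0,0,-1], (Equiv.swap 0 3 * Equiv.swap 0 1 * Equiv.swap 0 2 * Equiv.swap 0 1))
def e29 : Matrix (Fin 6) (Fin 6) ℤ × Equiv.Perm (Fin 4) := (!![0,0,-1,0,0,0; -1,0,0,0,0,0; 0,1,0,0,0,0; 0,0,0,0,1,0; 0,0,0,0,0,-1; 0,0,0,-1,0,0], (Equiv.swap 0 3 * Equiv.swap 0 1 * Equiv.swap 0 2 * Equiv.swap 0 3))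
def e30 : Matrix (Fin 6) (Fin 6) ℤ × Equiv.Perm (Fin 4) := (!![0,-1,0,0,0,0; 0,0,1,0,0,0; -1,0,0,0,0,0; 0,0,0,0,0,-1; 0,0,0,1,0,0; 0,0,0,0,-1,0], (Equiv.swap 0 3 * Equiv.swap 0 2 * Equiv.swap 0 1 * Equiv.swap 0 3))
def e31 : Matrix (Fin 6) (Fin 6) ℤ × Equiv.Perm (Fin 4) := (!![0,0,0,0,1,0; 1,0,0,0,0,0; 0,0,0,1,0,0; 0,0,1,0,0,0; 0,0,0,0,0,-1; 0,1,0,0,0,0], (Equiv.swap 0 1 * Equiv.swap 0 2 * Equiv.swap 0 1 * Equiv.swap 0 3 * Equiv.swap 0 1))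
def e32 : Matrix (Fin 6) (Fin 6) ℤ × Equiv.Perm (Fin 4) := (!![0,0,0,1,0,0; 0,0,0,0,1,0; 1,0,0,0,0,0; 0,0,0,0,0,-1; 0,1,0,0,0,0; 0,0,1,0,0,0], (Equiv.swap 0 1 * Equiv.swap 0 2 * Equiv.swap 0 1 * Equiv.swap 0 3 * Equiv.swap 0 2))
def e33 : Matrix (Fin 6) (Fin 6) ℤ × Equiv.Perm (Fin 4) := (!![0,0,0,0,0,1; 0,0,0,-1,0,0; 0,-1,0,0,0,0; 0,0,0,0,1,0; 0,0,-1,0,0,0; 1,0,0,0,0,0], (Equiv.swap 0 1 * Equiv.swap 0 2 * Equiv.swap 0 3 * Equiv.swap 0 1 * Equiv.swap 0 2))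
def e34 : Matrix (Fin 6) (Fin 6) ℤ × Equiv.Perm (Fin 4) := (!![0,-1,0,0,0,0; -1,0,0,0,0,0; 0,0,-1,0,0,0; 0,0,0,1,0,0; 0,0,0,0,0,1; 0,0,0,0,1,0], (Equiv.swap 0 1 * Equiv.swap 0 2 * Equiv.swap 0 3 * Equiv.swap 0 2 * Equiv.swap 0 1))
def e35 : Matrix (Fin 6) (Fin 6) ℤ × Equiv.Perm (Fin 4) := (!![0,1,0,0,0,0; 0,0,0,0,0,1; 0,0,0,1,0,0; 0,0,1,0,0,0; 1,0,0,0,0,0; 0,0,0,0,-1,0], (Equiv.swap 0 1 * Equiv.swap 0 3 * Equiv.swap 0 1 * Equiv.swap 0 2 * Equiv.swap 0 1))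
def e36 : Matrix (Fin 6) (Fin 6) ℤ × Equiv.Perm (Fin 4) := (!![0,0,0,0,0,1; 0,0,0,1,0,0; 0,1,0,0,0,0; 0,0,0,0,-1,0; 0,0,1,0,0,0; 1,0,0,0,0,0], (Equiv.swap 0 1 * Equiv.swap 0 3 * Equiv.swap 0 1 * Equiv.swap 0 2 * Equiv.swap 0 3))
def e37 : Matrix (Fin 6) (Fin 6) ℤ × Equiv.Perm (Fin 4) := (!![0,0,0,-1,0,0; 0,0,0,0,1,0; -1,0,0,0,0,0; 0,0,0,0,0,1; 0,1,0,0,0,0; 0,0,-1,0,0,0], (Equiv.swap 0 1 * Equiv.swap 0 3 * Equiv.swap 0 2 * Equiv.swap 0 1 * Equiv.swap 0 3))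
def e38 : Matrix (Fin 6) (Fin 6) ℤ × Equiv.Perm (Fin 4) := (!![0,0,-1,0,0,0; 0,-1,0,0,0,0; -1,0,0,0,0,0; 0,0,0,0,0,1; 0,0,0,0,1,0; 0,0,0,1,0,0], (Equiv.swap 0 2 * Equiv.swap 0 1 * Equiv.swap 0 3 * Equiv.swap 0 1 * Equiv.swap 0 2))
def e39 : Matrix (Fin 6) (Fin 6) ℤ × Equiv.Perm (Fin 4) := (!![0,0,0,0,0,1; 0,0,-1,0,0,0; 0,0,0,0,-1,0; 0,-1,0,0,0,0; 0,0,0,1,0,0; 1,0,0,0,0,0], (Equiv.swap 0 2 * Equiv.swap 0 1 * Equiv.swap 0 3 * Equiv.swap 0 2 * Equiv.swap 0 1))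
def e40 : Matrix (Fin 6) (Fin 6) ℤ × Equiv.Perm (Fin 4) := (!![0,0,1,0,0,0; 0,0,0,0,1,0; 0,0,0,0,0,1; 1,0,0,0,0,0; 0,1,0,0,0,0; 0,0,0,-1,0,0], (Equiv.swap 0 2 * Equiv.swap 0 3 * Equiv.swap 0 1 * Equiv.swap 0 2 * Equiv.swap 0 1))
def e41 : Matrix (Fin 6) (Fin 6) ℤ × Equiv.Perm (Fin 4) := (!![0,0,0,0,-1,0; -1,0,0,0,0,0; 0,0,0,1,0,0; 0,0,1,0,0,0; 0,0,0,0,0,1; 0,-1,0,0,0,0], (Equiv.swap 0 2 * Equiv.swap 0 3 * Equiv.swap 0 1 * Equiv.swap 0 2 * Equiv.swap 0 3))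
def e42 : Matrix (Fin 6) (Fin 6) ℤ × Equiv.Perm (Fin 4) := (!![0,0,0,0,0,1; 0,0,1,0,0,0; 0,0,0,0,1,0; 0,1,0,0,0,0; 0,0,0,-1,0,0; 1,0,0,0,0,0], (Equiv.swap 0 2 * Equiv.swap 0 3 * Equiv.swap 0 2 * Equiv.swap 0 1 * Equiv.swap 0 3))
def e43 : Matrix (Fin 6) (Fin 6) ℤ × Equiv.Perm (Fin 4) := (!![-1,0,0,0,0,0; 0,0,-1,0,0,0; 0,-1,0,0,0,0; 0,0,0,0,1,0; 0,0,0,1,0,0; 0,0,0,0,0,1], (Equiv.swap 0 3 * Equiv.swap 0 1 * Equiv.swap 0 2 * Equiv.swap 0 1 * Equiv.swap 0 3))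
def e44 : Matrix (Fin 6) (Fin 6) ℤ × Equiv.Perm (Fin 4) := (!![0,0,-1,0,0,0; 0,0,0,0,1,0; 0,0,0,0,0,-1; -1,0,0,0,0,0; 0,1,0,0,0,0; 0,0,0,1,0,0], (Equiv.swap 0 3 * Equiv.swap 0 1 * Equiv.swap 0 2 * Equiv.swap 0 3 * Equiv.swap 0 1))
def e45 : Matrix (Fin 6) (Fin 6) ℤ × Equiv.Perm (Fin 4) := (!![0,-1,0,0,0,0; 0,0,0,0,0,-1; 0,0,0,1,0,0; 0,0,1,0,0,0; -1,0,0,0,0,0; 0,0,0,0,1,0], (Equiv.swap 0 3 * Equiv.swap 0 2 * Equiv.swap 0 1 * Equiv.swap 0 3 * Equiv.swap 0 2))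
def e46 : Matrix (Fin 6) (Fin 6) ℤ × Equiv.Perm (Fin 4) := (!![0,0,0,0,-1,0; 0,0,0,-1,0,0; -1,0,0,0,0,0; 0,0,0,0,0,-1; 0,0,1,0,0,0; 0,1,0,0,0,0], (Equiv.swap 0 1 * Equiv.swap 0 2 * Equiv.swap 0 1 * Equiv.swap 0 3 * Equiv.swap 0 1 * Equiv.swap 0 2))
def e47 : Matrix (Fin 6) (Fin 6) ℤ × Equiv.Perm (Fin 4) := (!![0,0,0,-1,0,0; -1,0,0,0,0,0; 0,0,0,0,-1,0; 0,1,0,0,0,0; 0,0,0,0,0,-1; 0,0,1,0,0,0], (Equiv.swap 0 1 * Equiv.swap 0 2 * Equiv.swap 0 1 * Equiv.swap 0 3 * Equiv.swap 0 2 * Equiv.swap 0 1))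
def e48 : Matrix (Fin 6) (Fin 6) ℤ × Equiv.Perm (Fin 4) := (!![0,-1,0,0,0,0; 0,0,0,1,0,0; 0,0,0,0,0,1; -1,0,0,0,0,0; 0,0,-1,0,0,0; 0,0,0,0,-1,0], (Equiv.swap 0 1 * Equiv.swap 0 2 * Equiv.swap 0 3 * Equiv.swap 0 1 * Equiv.swap 0 2 * Equiv.swap 0 1))
def e49 : Matrix (Fin 6) (Fin 6) ℤ × Equiv.Perm (Fin 4) := (!![0,0,0,0,0,-1; 0,1,0,0,0,0; 0,0,0,1,0,0; 0,0,-1,0,0,0; 0,0,0,0,1,0; 1,0,0,0,0,0], (Equiv.swap 0 1 * Equiv.swap 0 2 * Equiv.swap 0 3 * Equiv.swap 0 1 * Equiv.swap 0 2 * Equiv.swap 0 3))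
def e50 : Matrix (Fin 6) (Fin 6) ℤ × Equiv.Perm (Fin 4) := (!![0,0,0,1,0,0; -1,0,0,0,0,0; 0,0,0,0,1,0; 0,-1,0,0,0,0; 0,0,0,0,0,-1; 0,0,-1,0,0,0], (Equiv.swap 0 1 * Equiv.swap 0 2 * Equiv.swap 0 3 * Equiv.swap 0 2 * Equiv.swap 0 1 * Equiv.swap 0 3))
def e51 : Matrix (Fin 6) (Fin 6) ℤ × Equiv.Perm (Fin 4) := (!![0,0,0,-1,0,0; 0,0,0,0,0,-1; 0,-1,0,0,0,0; 0,0,0,0,-1,0; 1,0,0,0,0,0; 0,0,1,0,0,0], (Equiv.swap 0 1 * Equiv.swap 0 3 * Equiv.swap 0 1 * Equiv.swap 0 2 * Equiv.swap 0 1 * Equiv.swap 0 3))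
def e52 : Matrix (Fin 6) (Fin 6) ℤ × Equiv.Perm (Fin 4) := (!![0,-1,0,0,0,0; 0,0,0,-1,0,0; 0,0,0,0,0,-1; 1,0,0,0,0,0; 0,0,1,0,0,0; 0,0,0,0,-1,0], (Equiv.swap 0 1 * Equiv.swap 0 3 * Equiv.swap 0 1 * Equiv.swap 0 2 * Equiv.swap 0 3 * Equiv.swap 0 1))
def e53 : Matrix (Fin 6) (Fin 6) ℤ × Equiv.Perm (Fin 4) := (!![1,0,0,0,0,0; 0,0,0,0,-1,0; 0,0,0,1,0,0; 0,0,-1,0,0,0; 0,1,0,0,0,0; 0,0,0,0,0,1], (Equiv.swap 0 1 * Equiv.swap 0 3 * Equiv.swap 0 2 * Equiv.swap 0 1 * Equiv.swap 0 3 * Equiv.swap 0 2))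
def e54 : Matrix (Fin 6) (Fin 6) ℤ × Equiv.Perm (Fin 4) := (!![0,0,-1,0,0,0; 0,0,0,0,0,1; 0,0,0,0,1,0; 0,-1,0,0,0,0; -1,0,0,0,0,0; 0,0,0,-1,0,0], (Equiv.swap 0 2 * Equiv.swap 0 1 * Equiv.swap 0 3 * Equiv.swap 0 1 * Equiv.swap 0 2 * Equiv.swap 0 1))
def e55 : Matrix (Fin 6) (Fin 6) ℤ × Equiv.Perm (Fin 4) := (!![0,0,0,0,1,0; 0,0,0,1,0,0; -1,0,0,0,0,0; 0,0,0,0,0,-1; 0,0,-1,0,0,0; 0,-1,0,0,0,0], (Equiv.swap 0 2 * Equiv.swap 0 1 * Equiv.swap 0 3 * Equiv.swap 0 1 * Equiv.swap 0 2 * Equiv.swap 0 3))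
def e56 : Matrix (Fin 6) (Fin 6) ℤ × Equiv.Perm (Fin 4) := (!![0,0,0,0,0,-1; 0,0,0,0,1,0; 0,0,1,0,0,0; 0,0,0,1,0,0; 0,-1,0,0,0,0; 1,0,0,0,0,0], (Equiv.swap 0 2 * Equiv.swap 0 1 * Equiv.swap 0 3 * Equiv.swap 0 2 * Equiv.swap 0 1 * Equiv.swap 0 3))
def e57 : Matrix (Fin 6) (Fin 6) ℤ × Equiv.Perm (Fin 4) := (!![0,0,0,0,-1,0; 0,0,-1,0,0,0; 0,0,0,0,0,-1; 1,0,0,0,0,0; 0,0,0,-1,0,0; 0,1,0,0,0,0], (Equiv.swap 0 2 * Equiv.swap 0 3 * Equiv.swap 0 1 * Equiv.swap 0 2 * Equiv.swap 0 1 * Equiv.swap 0 3))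
def e58 : Matrix (Fin 6) (Fin 6) ℤ × Equiv.Perm (Fin 4) := (!![1,0,0,0,0,0; 0,0,0,0,1,0; 0,0,0,-1,0,0; 0,0,1,0,0,0; 0,-1,0,0,0,0; 0,0,0,0,0,1], (Equiv.swap 0 2 * Equiv.swap 0 3 * Equiv.swap 0 1 * Equiv.swap 0 2 * Equiv.swap 0 3 * Equiv.swap 0 1))
def e59 : Matrix (Fin 6) (Fin 6) ℤ × Equiv.Perm (Fin 4) := (!![0,0,-1,0,0,0; 0,0,0,0,0,-1; 0,0,0,0,-1,0; 0,1,0,0,0,0; 1,0,0,0,0,0; 0,0,0,-1,0,0], (Equiv.swap 0 2 * Equiv.swap 0 3 * Equiv.swap 0 2 * Equiv.swap 0 1 * Equiv.swap 0 3 * Equiv.swap 0 2))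
def e60 : Matrix (Fin 6) (Fin 6) ℤ × Equiv.Perm (Fin 4) := (!![0,0,0,0,1,0; 0,0,-1,0,0,0; 0,0,0,0,0,1; -1,0,0,0,0,0; 0,0,0,-1,0,0; 0,-1,0,0,0,0], (Equiv.swap 0 3 * Equiv.swap 0 1 * Equiv.swap 0 2 * Equiv.swap 0 1 * Equiv.swap 0 3 * Equiv.swap 0 1))
def e61 : Matrix (Fin 6) (Fin 6) ℤ × Equiv.Perm (Fin 4) := (!![0,0,0,1,0,0; 0,0,0,0,0,1; 0,-1,0,0,0,0; 0,0,0,0,-1,0; -1,0,0,0,0,0; 0,0,-1,0,0,0], (Equiv.swap 0 3 * Equiv.swap 0 1 * Equiv.swap 0 2 * Equiv.swap 0 1 * Equiv.swap 0 3 * Equiv.swap 0 2))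
def e62 : Matrix (Fin 6) (Fin 6) ℤ × Equiv.Perm (Fin 4) := (!![0,0,0,0,0,1; 0,0,0,0,-1,0; 0,0,1,0,0,0; 0,0,0,1,0,0; 0,1,0,0,0,0; -1,0,0,0,0,0], (Equiv.swap 0 3 * Equiv.swap 0 1 * Equiv.swap 0 2 * Equiv.swap 0 3 * Equiv.swap 0 1 * Equiv.swap 0 2))
def e63 : Matrix (Fin 6) (Fin 6) ℤ × Equiv.Perm (Fin 4) := (!![0,0,0,0,0,1; 0,1,0,0,0,0; 0,0,0,-1,0,0; 0,0,1,0,0,0; 0,0,0,0,1,0; -1,0,0,0,0,0], (Equiv.swap 0 3 * Equiv.swap 0 2 * Equiv.swap 0 1 * Equiv.swap 0 3 * Equiv.swap 0 2 * Equiv.swap 0 1))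
def e64 : Matrix (Fin 6) (Fin 6) ℤ × Equiv.Perm (Fin 4) := (!![1,0,0,0,0,0; 0,0,0,1,0,0; 0,0,0,0,1,0; 0,1,0,0,0,0; 0,0,1,0,0,0; 0,0,0,0,0,-1], (Equiv.swap 0 1 * Equiv.swap 0 2 * Equiv.swap 0 1 * Equiv.swap 0 3 * Equiv.swap 0 1 * Equiv.swap 0 2 * Equiv.swap 0 1))
def e65 : Matrix (Fin 6) (Fin 6) ℤ × Equiv.Perm (Fin 4) := (!![0,0,1,0,0,0; 0,1,0,0,0,0; -1,0,0,0,0,0; 0,0,0,0,0,1; 0,0,0,0,-1,0; 0,0,0,-1,0,0], (Equiv.swap 0 1 * Equiv.swap 0 2 * Equiv.swap 0 1 * Equiv.swap 0 3 * Equiv.swap 0 1 * Equiv.swap 0 2 * Equiv.swap 0 3))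
def e66 : Matrix (Fin 6) (Fin 6) ℤ × Equiv.Perm (Fin 4) := (!![0,1,0,0,0,0; -1,0,0,0,0,0; 0,0,1,0,0,0; 0,0,0,-1,0,0; 0,0,0,0,0,1; 0,0,0,0,-1,0], (Equiv.swap 0 1 * Equiv.swap 0 2 * Equiv.swap 0 1 * Equiv.swap 0 3 * Equiv.swap 0 2 * Equiv.swap 0 1 * Equiv.swap 0 3))
def e67 : Matrix (Fin 6) (Fin 6) ℤ × Equiv.Perm (Fin 4) := (!![0,0,0,1,0,0; 0,-1,0,0,0,0; 0,0,0,0,0,-1; -1,0,0,0,0,0; 0,0,0,0,1,0; 0,0,1,0,0,0], (Equiv.swap 0 1 * Equiv.swap 0 2 * Equiv.swap 0 3 * Equiv.swap 0 1 * Equiv.swap 0 2 * Equiv.swap 0 1 * Equiv.swap 0 3))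
def e68 : Matrix (Fin 6) (Fin 6) ℤ × Equiv.Perm (Fin 4) := (!![0,1,0,0,0,0; 0,0,0,0,0,-1; 0,0,0,-1,0,0; 0,0,-1,0,0,0; -1,0,0,0,0,0; 0,0,0,0,-1,0], (Equiv.swap 0 1 * Equiv.swap 0 2 * Equiv.swap 0 3 * Equiv.swap 0 1 * Equiv.swap 0 2 * Equiv.swap 0 3 * Equiv.swap 0 1))
def e69 : Matrix (Fin 6) (Fin 6) ℤ × Equiv.Perm (Fin 4) := (!![-1,0,0,0,0,0; 0,0,0,1,0,0; 0,0,0,0,-1,0; 0,-1,0,0,0,0; 0,0,1,0,0,0; 0,0,0,0,0,1], (Equiv.swap 0 1 * Equiv.swap 0 2 * Equiv.swap 0 3 * Equiv.swap 0 2 * Equiv.swap 0 1 * Equiv.swap 0 3 * Equiv.swap 0 2))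
def e70 : Matrix (Fin 6) (Fin 6) ℤ × Equiv.Perm (Fin 4) := (!![0,0,0,1,0,0; 0,1,0,0,0,0; 0,0,0,0,0,1; 1,0,0,0,0,0; 0,0,0,0,-1,0; 0,0,1,0,0,0], (Equiv.swap 0 1 * Equiv.swap 0 3 * Equiv.swap 0 1 * Equiv.swap 0 2 * Equiv.swap 0 1 * Equiv.swap 0 3 * Equiv.swap 0 1))
def e71 : Matrix (Fin 6) (Fin 6) ℤ × Equiv.Perm (Fin 4) := (!![1,0,0,0,0,0; 0,0,1,0,0,0; 0,-1,0,0,0,0; 0,0,0,0,1,0; 0,0,0,-1,0,0; 0,0,0,0,0,-1], (Equiv.swap 0 1 * Equiv.swap 0 3 * Equiv.swap 0 1 * Equiv.swap 0 2 * Equiv.swap 0 1 * Equiv.swap 0 3 * Equiv.swap 0 2))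
def e72 : Matrix (Fin 6) (Fin 6) ℤ × Equiv.Perm (Fin 4) := (!![0,-1,0,0,0,0; 1,0,0,0,0,0; 0,0,1,0,0,0; 0,0,0,-1,0,0; 0,0,0,0,0,-1; 0,0,0,0,1,0], (Equiv.swap 0 1 * Equiv.swap 0 3 * Equiv.swap 0 1 * Equiv.swap 0 2 * Equiv.swap 0 3 * Equiv.swap 0 1 * Equiv.swap 0 2))
def e73 : Matrix (Fin 6) (Fin 6) ℤ × Equiv.Perm (Fin 4) := (!![0,0,0,0,-1,0; 1,0,0,0,0,0; 0,0,0,-1,0,0; 0,0,-1,0,0,0; 0,0,0,0,0,-1; 0,-1,0,0,0,0], (Equiv.swap 0 1 * Equiv.swap 0 3 * Equiv.swap 0 2 * Equiv.swap 0 1 * Equiv.swap 0 3 * Equiv.swap 0 2 * Equiv.swap 0 1))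
def e74 : Matrix (Fin 6) (Fin 6) ℤ × Equiv.Perm (Fin 4) := (!![0,0,0,0,1,0; 0,0,0,0,0,-1; 0,0,-1,0,0,0; 0,0,0,1,0,0; -1,0,0,0,0,0; 0,1,0,0,0,0], (Equiv.swap 0 2 * Equiv.swap 0 1 * Equiv.swap 0 3 * Equiv.swap 0 1 * Equiv.swap 0 2 * Equiv.swap 0 1 * Equiv.swap 0 3))
def e75 : Matrix (Fin 6) (Fin 6) ℤ × Equiv.Perm (Fin 4) := (!![-1,0,0,0,0,0; 0,0,0,-1,0,0; 0,0,0,0,1,0; 0,1,0,0,0,0; 0,0,-1,0,0,0; 0,0,0,0,0,1], (Equiv.swap 0 2 * Equiv.swap 0 1 * Equiv.swap 0 3 * Equiv.swap 0 1 * Equiv.swap 0 2 * Equiv.swap 0 3 * Equiv.swap 0 1))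
def e76 : Matrix (Fin 6) (Fin 6) ℤ × Equiv.Perm (Fin 4) := (!![0,0,1,0,0,0; 0,0,0,0,-1,0; 0,0,0,0,0,-1; -1,0,0,0,0,0; 0,-1,0,0,0,0; 0,0,0,-1,0,0], (Equiv.swap 0 2 * Equiv.swap 0 1 * Equiv.swap 0 3 * Equiv.swap 0 2 * Equiv.swap 0 1 * Equiv.swap 0 3 * Equiv.swap 0 2))
def e77 : Matrix (Fin 6) (Fin 6) ℤ × Equiv.Perm (Fin 4) := (!![1,0,0,0,0,0; 0,0,-1,0,0,0; 0,1,0,0,0,0; 0,0,0,0,-1,0; 0,0,0,1,0,0; 0,0,0,0,0,-1], (Equiv.swap 0 2 * Equiv.swap 0 3 * Equiv.swap 0 1 * Equiv.swap 0 2 * Equiv.swap 0 1 * Equiv.swap 0 3 * Equiv.swap 0 1))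
def e78 : Matrix (Fin 6) (Fin 6) ℤ × Equiv.Perm (Fin 4) := (!![0,0,0,0,1,0; 0,0,0,0,0,1; 0,0,1,0,0,0; 0,0,0,-1,0,0; 1,0,0,0,0,0; 0,1,0,0,0,0], (Equiv.swap 0 2 * Equiv.swap 0 3 * Equiv.swap 0 1 * Equiv.swap 0 2 * Equiv.swap 0 1 * Equiv.swap 0 3 * Equiv.swap 0 2))
def e79 : Matrix (Fin 6) (Fin 6) ℤ × Equiv.Perm (Fin 4) := (!![0,0,0,-1,0,0; 0,0,0,0,-1,0; 1,0,0,0,0,0; 0,0,0,0,0,-1; 0,-1,0,0,0,0; 0,0,-1,0,0,0], (Equiv.swap 0 2 * Equiv.swap 0 3 * Equiv.swap 0 1 * Equiv.swap 0 2 * Equiv.swap 0 3 * Equiv.swap 0 1 * Equiv.swap 0 2))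
def e80 : Matrix (Fin 6) (Fin 6) ℤ × Equiv.Perm (Fin 4) := (!![0,0,-1,0,0,0; 0,1,0,0,0,0; 1,0,0,0,0,0; 0,0,0,0,0,-1; 0,0,0,0,-1,0; 0,0,0,1,0,0], (Equiv.swap 0 2 * Equiv.swap 0 3 * Equiv.swap 0 2 * Equiv.swap 0 1 * Equiv.swap 0 3 * Equiv.swap 0 2 * Equiv.swap 0 1))
def e81 : Matrix (Fin 6) (Fin 6) ℤ × Equiv.Perm (Fin 4) := (!![0,0,0,0,-1,0; 0,0,0,0,0,1; 0,0,-1,0,0,0; 0,0,0,1,0,0; 1,0,0,0,0,0; 0,-1,0,0,0,0], (Equiv.swap 0 3 * Equiv.swap 0 1 * Equiv.swap 0 2 * Equiv.swap 0 1 * Equiv.swap 0 3 * Equiv.swap 0 1 * Equiv.swap 0 2))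
def e82 : Matrix (Fin 6) (Fin 6) ℤ × Equiv.Perm (Fin 4) := (!![0,0,0,-1,0,0; 0,-1,0,0,0,0; 0,0,0,0,0,1; 1,0,0,0,0,0; 0,0,0,0,1,0; 0,0,-1,0,0,0], (Equiv.swap 0 3 * Equiv.swap 0 1 * Equiv.swap 0 2 * Equiv.swap 0 1 * Equiv.swap 0 3 * Equiv.swap 0 2 * Equiv.swap 0 1))
def e83 : Matrix (Fin 6) (Fin 6) ℤ × Equiv.Perm (Fin 4) := (!![0,0,0,0,0,-1; 0,0,1,0,0,0; 0,0,0,0,-1,0; 0,-1,0,0,0,0; 0,0,0,-1,0,0; -1,0,0,0,0,0], (Equiv.swap 0 3 * Equiv.swap 0 1 * Equiv.swap 0 2 * Equiv.swap 0 3 * Equiv.swap 0 1 * Equiv.swap 0 2 * Equiv.swap 0 3))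
def e84 : Matrix (Fin 6) (Fin 6) ℤ × Equiv.Perm (Fin 4) := (!![0,0,0,0,0,-1; 0,0,0,-1,0,0; 0,1,0,0,0,0; 0,0,0,0,-1,0; 0,0,-1,0,0,0; -1,0,0,0,0,0], (Equiv.swap 0 3 * Equiv.swap 0 2 * Equiv.swap 0 1 * Equiv.swap 0 3 * Equiv.swap 0 2 * Equiv.swap 0 1 * Equiv.swap 0 3))
def e85 : Matrix (Fin 6) (Fin 6) ℤ × Equiv.Perm (Fin 4) := (!![1,0,0,0,0,0; 0,-1,0,0,0,0; 0,0,-1,0,0,0; 0,0,0,-1,0,0; 0,0,0,0,-1,0; 0,0,0,0,0,1], (Equiv.swap 0 1 * Equiv.swap 0 2 * Equiv.swap 0 1 * Equiv.swap 0 3 * Equiv.swap 0 1 * Equiv.swap 0 2 * Equiv.swap 0 1 * Equiv.swap 0 3))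
def e86 : Matrix (Fin 6) (Fin 6) ℤ × Equiv.Perm (Fin 4) := (!![0,0,1,0,0,0; 0,0,0,0,0,-1; 0,0,0,0,1,0; 0,-1,0,0,0,0; 1,0,0,0,0,0; 0,0,0,1,0,0], (Equiv.swap 0 1 * Equiv.swap 0 2 * Equiv.swap 0 1 * Equiv.swap 0 3 * Equiv.swap 0 1 * Equiv.swap 0 2 * Equiv.swap 0 3 * Equiv.swap 0 1))
def e87 : Matrix (Fin 6) (Fin 6) ℤ × Equiv.Perm (Fin 4) := (!![0,1,0,0,0,0; 0,0,0,1,0,0; 0,0,0,0,0,-1; 1,0,0,0,0,0; 0,0,-1,0,0,0; 0,0,0,0,1,0], (Equiv.swap 0 1 * Equiv.swap 0 2 * Equiv.swap 0 1 * Equiv.swap 0 3 * Equiv.swap 0 2 * Equiv.swap 0 1 * Equiv.swap 0 3 * Equiv.swap 0 2))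
def e88 : Matrix (Fin 6) (Fin 6) ℤ × Equiv.Perm (Fin 4) := (!![0,0,0,-1,0,0; 0,0,0,0,0,1; 0,1,0,0,0,0; 0,0,0,0,1,0; -1,0,0,0,0,0; 0,0,1,0,0,0], (Equiv.swap 0 1 * Equiv.swap 0 2 * Equiv.swap 0 3 * Equiv.swap 0 1 * Equiv.swap 0 2 * Equiv.swap 0 1 * Equiv.swap 0 3 * Equiv.swap 0 1))
def e89 : Matrix (Fin 6) (Fin 6) ℤ × Equiv.Perm (Fin 4) := (!![-1,0,0,0,0,0; 0,-1,0,0,0,0; 0,0,1,0,0,0; 0,0,0,1,0,0; 0,0,0,0,-1,0; 0,0,0,0,0,-1], (Equiv.swap 0 1 * Equiv.swap 0 2 * Equiv.swap 0 3 * Equiv.swap 0 1 * Equiv.swap 0 2 * Equiv.swap 0 1 * Equiv.swap 0 3 * Equiv.swap 0 2))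
def e90 : Matrix (Fin 6) (Fin 6) ℤ × Equiv.Perm (Fin 4) := (!![0,1,0,0,0,0; 0,0,1,0,0,0; 1,0,0,0,0,0; 0,0,0,0,0,1; 0,0,0,1,0,0; 0,0,0,0,1,0], (Equiv.swap 0 1 * Equiv.swap 0 2 * Equiv.swap 0 3 * Equiv.swap 0 1 * Equiv.swap 0 2 * Equiv.swap 0 3 * Equiv.swap 0 1 * Equiv.swap 0 2))
def e91 : Matrix (Fin 6) (Fin 6) ℤ × Equiv.Perm (Fin 4) := (!![0,0,0,0,1,0; 0,0,0,-1,0,0; 1,0,0,0,0,0; 0,0,0,0,0,1; 0,0,1,0,0,0; 0,-1,0,0,0,0], (Equiv.swap 0 1 * Equiv.swap 0 2 * Equiv.swap 0 3 * Equiv.swap 0 2 * Equiv.swap 0 1 * Equiv.swap 0 3 * Equiv.swap 0 2 * Equiv.swap 0 1))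
def e92 : Matrix (Fin 6) (Fin 6) ℤ × Equiv.Perm (Fin 4) := (!![-1,0,0,0,0,0; 0,1,0,0,0,0; 0,0,-1,0,0,0; 0,0,0,-1,0,0; 0,0,0,0,1,0; 0,0,0,0,0,-1], (Equiv.swap 0 1 * Equiv.swap 0 3 * Equiv.swap 0 1 * Equiv.swap 0 2 * Equiv.swap 0 1 * Equiv.swap 0 3 * Equiv.swap 0 1 * Equiv.swap 0 2))
def e93 : Matrix (Fin 6) (Fin 6) ℤ × Equiv.Perm (Fin 4) := (!![0,0,0,0,-1,0; 0,0,1,0,0,0; 0,0,0,0,0,1; -1,0,0,0,0,0; 0,0,0,1,0,0; 0,1,0,0,0,0], (Equiv.swap 0 1 * Equiv.swap 0 3 * Equiv.swap 0 1 * Equiv.swap 0 2 * Equiv.swap 0 1 * Equiv.swap 0 3 * Equiv.swap 0 2 * Equiv.swap 0 1))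
def e94 : Matrix (Fin 6) (Fin 6) ℤ × Equiv.Perm (Fin 4) := (!![0,0,0,1,0,0; 1,0,0,0,0,0; 0,0,0,0,-1,0; 0,1,0,0,0,0; 0,0,0,0,0,1; 0,0,-1,0,0,0], (Equiv.swap 0 1 * Equiv.swap 0 3 * Equiv.swap 0 1 * Equiv.swap 0 2 * Equiv.swap 0 3 * Equiv.swap 0 1 * Equiv.swap 0 2 * Equiv.swap 0 3))
def e95 : Matrix (Fin 6) (Fin 6) ℤ × Equiv.Perm (Fin 4) := (!![0,0,1,0,0,0; 1,0,0,0,0,0; 0,1,0,0,0,0; 0,0,0,0,1,0; 0,0,0,0,0,1; 0,0,0,1,0,0], (Equiv.swap 0 1 * Equiv.swap 0 3 * Equiv.swap 0 2 * Equiv.swap 0 1 * Equiv.swap 0 3 * Equiv.swap 0 2 * Equiv.swap 0 1 * Equiv.swap 0 3))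
def L : List (Matrix (Fin 6) (Fin 6) ℤ × Equiv.Perm (Fin 4)) := [e0, e1, e2, e3, e4, e5, e6, e7, e8, e9, e10, e11, e12, e13, e14, e15, e16, e17, e18, e19, e20, e21, e22, e23, e24, e25, e26, e27, e28, e29, e30, e31, e32, e33, e34, e35, e36, e37, e38, e39, e40, e41, e42, e43, e44, e45, e46, e47, e48, e49, e50, e51, e52, e53, e54, e55, e56, e57, e58, e59, e60, e61, e62, e63, e64, e65, e66, e67, e68, e69, e70, e71, e72, e73, e74, e75, e76, e77, e78, e79, e80, e81, e82, e83, e84, e85, e86, e87, e88, e89, e90, e91, e92, e93, e94, e95]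

set_option maxHeartbeats 8000000
set_option maxRecDepth 100000

lemma ONE' : ((1 : Matrix (Fin 6) (Fin 6) ℤ), (1 : Equiv.Perm (Fin 4))) ∈ L := by decide

lemma CHKX : ∀ q ∈ L, (MXmat * q.1, Equiv.swap 0 1 * q.2) ∈ L := by decide

lemma CHKY : ∀ q ∈ L, (MYmat * q.1, Equiv.swap 0 2 * q.2) ∈ L := by decide

lemma CHKZ : ∀ q ∈ L, (MZmat * q.1, Equiv.swap 0 3 * q.2) ∈ L := by decide

/-- the 4-cycle `(0 1 2 3)` -/
def c4 : Equiv.Perm (Fin 4) := Equiv.swap 0 3 * Equiv.swap 0 2 * Equiv.swap 0 1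

lemma FINAL : ∀ q ∈ L, q.2 = c4 → ¬ q.1 ^ 4 = 1 := by decide

lemma key (π : G →* Equiv.Perm (Fin 4))
    (hX : π ⟨MX, hMX⟩ = Equiv.swap 0 1) (hY : π ⟨MY, hMY⟩ = Equiv.swap 0 2)
    (hZ : π ⟨MZ, hMZ⟩ = Equiv.swap 0 3) :
    ∀ g : G, (((g : GL (Fin 6) ℤ) : Matrix (Fin 6) (Fin 6) ℤ), π g) ∈ L := by
  classical
  set F : GL (Fin 6) ℤ → Equiv.Perm (Fin 4) :=
    fun x => if h : x ∈ G then π ⟨x, h⟩ else 1 with hFdef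
  have hF : ∀ (x : GL (Fin 6) ℤ) (h : x ∈ G), F x = π ⟨x, h⟩ := fun x h => dif_pos h
  have step : ∀ x ∈ ({MX, MY, MZ} : Set (GL (Fin 6) ℤ)), ∀ (y : GL (Fin 6) ℤ),
      y ∈ G → ((y : Matrix (Fin 6) (Fin 6) ℤ), F y) ∈ L →
      (((x * y : GL (Fin 6) ℤ) : Matrix (Fin 6) (Fin 6) ℤ), F (x * y)) ∈ L := by
    rintro x (rfl | rfl | rfl) y hy ih
    · have hm : MX * y ∈ G := G.mul_mem hMX hy
      have : F (MX * y) = Equiv.swap 0 1 * F y := by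
        rw [hF _ hm, hF _ hy, show (⟨MX * y, hm⟩ : G) = ⟨MX, hMX⟩ * ⟨y, hy⟩ from rfl,
          _root_.map_mul, hX]
      rw [this]
      exact CHKX _ ih
    · have hm : MY * y ∈ G := G.mul_mem hMY hy
      have : F (MY * y) = Equiv.swap 0 2 * F y := by
        rw [hF _ hm, hF _ hy, show (⟨MY * y, hm⟩ : G) = ⟨MY, hMY⟩ * ⟨y, hy⟩ from rfl,
          _root_.map_mul, hY]
      rw [this]
      exact CHKY _ ih
    · have hm : MZ * y ∈ G := G.mul_mem hMZ hy
      have : F (MZ * y) = Equiv.swap 0 3 * F y := by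
        rw [hF _ hm, hF _ hy, show (⟨MZ * y, hm⟩ : G) = ⟨MZ, hMZ⟩ * ⟨y, hy⟩ from rfl,
          _root_.map_mul, hZ]
      rw [this]
      exact CHKZ _ ih
  have main : ∀ (x : GL (Fin 6) ℤ), x ∈ G →
      ((x : Matrix (Fin 6) (Fin 6) ℤ), F x) ∈ L := by
    intro x hx
    induction hx using Subgroup.closure_induction_left with
    | one =>
        have : F 1 = 1 := by
          rw [hF 1 (G.one_mem), show (⟨(1 : GL (Fin 6) ℤ), G.one_mem⟩ : G) = 1 from rfl,
            _root_.map_one]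
        rw [this]
        exact ONE'
    | mul_left x hxs y hy ih => exact step x hxs y hy ih
    | inv_mul_cancel x hxs y hy ih =>
        have hinv : x⁻¹ = x := by
          rcases hxs with rfl | rfl | rfl
          exacts [invMX, invMY, invMZ]
        rw [hinv]
        exact step x hxs y hy ih
  rintro ⟨x, hx⟩
  have := main x hx
  rwa [hF x hx] at this
/-- The extension `1 → K₄ → G → S₄ → 1` is not split: there is no group homomorphism
`s : S₄ → G` with `π ∘ s = id`. -/
theorem stmt_9 (π : G →* Equiv.Perm (Fin 4))
    (hX : π ⟨MX, hMX⟩ = Equiv.swap 0 1) (hY : π ⟨MY, hMY⟩ = Equiv.swap 0 2)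
    (hZ : π ⟨MZ, hMZ⟩ = Equiv.swap 0 3) :
    ¬ ∃ s : Equiv.Perm (Fin 4) →* G, π.comp s = MonoidHom.id (Equiv.Perm (Fin 4)) := by
  rintro ⟨s, hs⟩
  have hπc : π (s c4) = c4 := DFunLike.congr_fun hs c4
  have hc4 : c4 ^ 4 = 1 := by decide
  have h4 : s c4 ^ 4 = 1 := by rw [← _root_.map_pow, hc4, _root_.map_one]
  have hmem := key π hX hY hZ (s c4)
  refine FINAL _ hmem hπc ?_
  have h4' : (s c4 : GL (Fin 6) ℤ) ^ 4 = 1 := by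
    have := congrArg (fun g : G => (g : GL (Fin 6) ℤ)) h4
    simpa using this
  rw [← Units.val_pow_eq_pow_val, h4', Units.val_one]
end

section
/- The preimage under π of the Klein four subgroup V = {1, (0 1)(2 3), (0 2)(1 3), (0 3)(1 2)} of Perm({0,1,2,3}) equals the subgroup H of G generated by a := (M_Z M_X M_Y)² and b := (M_X M_Y M_Z)²; in particular this preimage has order 16. -/
open Matrix

def a : GL (Fin 6) ℤ := (MZ * MX * MY) ^ 2
def b : GL (Fin 6) ℤ := (MX * MY * MZ) ^ 2

namespace Stmt13Aux

abbrev GL6 := GL (Fin 6) ℤ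

/-- Coset representatives of `⟨a,b⟩` in `G`. -/
def T : Fin 6 → GL6 := ![1, MX, MY, MZ, MY * MX, MZ * MX]

lemma comm_ab : Commute a b := by
  have h : a * b = b * a := by decide
  exact h

lemma ha4 : a ^ 4 = 1 := by decide
lemma hb4 : b ^ 4 = 1 := by decide

lemma mul_form (i j i' j' : ℕ) :
    (a ^ i * b ^ j) * (a ^ i' * b ^ j') = a ^ (i + i') * b ^ (j + j') := by
  rw [mul_assoc, ← mul_assoc (b ^ j), (comm_ab.symm.pow_pow j i').eq,
    mul_assoc, ← mul_assoc, ← pow_add, ← pow_add]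

lemma conj_pow (m x : GL6) (i : ℕ) : m * x ^ i = (m * x * m⁻¹) ^ i * m := by
  induction i with
  | zero => simp
  | succ n ih =>
    rw [pow_succ, ← mul_assoc, ih, pow_succ]
    simp [mul_assoc]

lemma step (m t0 t1 : GL6) (p q r s u v : ℕ)
    (hma : m * a * m⁻¹ = a ^ p * b ^ q) (hmb : m * b * m⁻¹ = a ^ r * b ^ s)
    (hmt : m * t0 = a ^ u * b ^ v * t1) (i j : ℕ) :
    m * (a ^ i * b ^ j * t0) =
      a ^ (p * i + (r * j + u)) * b ^ (q * i + (s * j + v)) * t1 := by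
  have hc : (a ^ p * b ^ q) ^ i = a ^ (p * i) * b ^ (q * i) := by
    rw [(comm_ab.pow_pow p q).mul_pow, ← pow_mul, ← pow_mul]
  have hd : (a ^ r * b ^ s) ^ j = a ^ (r * j) * b ^ (s * j) := by
    rw [(comm_ab.pow_pow r s).mul_pow, ← pow_mul, ← pow_mul]
  rw [mul_assoc (a ^ i), ← mul_assoc m, conj_pow m a i, hma,
    mul_assoc ((a ^ p * b ^ q) ^ i) m, ← mul_assoc m (b ^ j) t0, conj_pow m b j, hmb,
    mul_assoc ((a ^ r * b ^ s) ^ j) m t0, hmt, hc, hd,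
    ← mul_assoc (a ^ (r * j) * b ^ (s * j)) (a ^ u * b ^ v) t1,
    mul_form, ← mul_assoc, mul_form]

lemma genstep (m : GL6) (hm : m ∈ ({MX, MY, MZ} : Set GL6)) (i j : ℕ) (k : Fin 6) :
    ∃ i' j' : ℕ, ∃ k' : Fin 6, m * (a ^ i * b ^ j * T k) = a ^ i' * b ^ j' * T k' := by
  simp only [Set.mem_insert_iff, Set.mem_singleton_iff] at hm
  rcases hm with rfl | rfl | rfl <;> fin_cases k
  · exact ⟨_, _, 1, step _ (T 0) (T 1) 1 0 3 3 0 0 (by decide) (by decide) (by decide) i j⟩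
  · exact ⟨_, _, 0, step _ (T 1) (T 0) 1 0 3 3 0 0 (by decide) (by decide) (by decide) i j⟩
  · exact ⟨_, _, 5, step _ (T 2) (T 5) 1 0 3 3 1 3 (by decide) (by decide) (by decide) i j⟩
  · exact ⟨_, _, 4, step _ (T 3) (T 4) 1 0 3 3 2 3 (by decide) (by decide) (by decide) i j⟩
  · exact ⟨_, _, 3, step _ (T 4) (T 3) 1 0 3 3 1 3 (by decide) (by decide) (by decide) i j⟩
  · exact ⟨_, _, 2, step _ (T 5) (T 2) 1 0 3 3 2 3 (by decide) (by decide) (by decide) i j⟩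
  · exact ⟨_, _, 2, step _ (T 0) (T 2) 3 3 0 1 0 0 (by decide) (by decide) (by decide) i j⟩
  · exact ⟨_, _, 4, step _ (T 1) (T 4) 3 3 0 1 0 0 (by decide) (by decide) (by decide) i j⟩
  · exact ⟨_, _, 0, step _ (T 2) (T 0) 3 3 0 1 0 0 (by decide) (by decide) (by decide) i j⟩
  · exact ⟨_, _, 5, step _ (T 3) (T 5) 3 3 0 1 2 1 (by decide) (by decide) (by decide) i j⟩
  · exact ⟨_, _, 1, step _ (T 4) (T 1) 3 3 0 1 0 0 (by decide) (by decide) (by decide) i j⟩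
  · exact ⟨_, _, 3, step _ (T 5) (T 3) 3 3 0 1 2 1 (by decide) (by decide) (by decide) i j⟩
  · exact ⟨_, _, 3, step _ (T 0) (T 3) 0 1 1 0 0 0 (by decide) (by decide) (by decide) i j⟩
  · exact ⟨_, _, 5, step _ (T 1) (T 5) 0 1 1 0 0 0 (by decide) (by decide) (by decide) i j⟩
  · exact ⟨_, _, 4, step _ (T 2) (T 4) 0 1 1 0 3 1 (by decide) (by decide) (by decide) i j⟩
  · exact ⟨_, _, 0, step _ (T 3) (T 0) 0 1 1 0 0 0 (by decide) (by decide) (by decide) i j⟩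
  · exact ⟨_, _, 2, step _ (T 4) (T 2) 0 1 1 0 3 1 (by decide) (by decide) (by decide) i j⟩
  · exact ⟨_, _, 1, step _ (T 5) (T 1) 0 1 1 0 0 0 (by decide) (by decide) (by decide) i j⟩

lemma gen_inv (m : GL6) (hm : m ∈ ({MX, MY, MZ} : Set GL6)) : m⁻¹ = m := by
  simp only [Set.mem_insert_iff, Set.mem_singleton_iff] at hm
  rcases hm with rfl | rfl | rfl <;> exact Units.ext rfl

/-- Every element of `G` has the form `a^i * b^j * T k`. -/
lemma cover {x : GL6} (hx : x ∈ G) : ∃ i j : ℕ, ∃ k : Fin 6, x = a ^ i * b ^ j * T k := by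
  induction hx using Subgroup.closure_induction_left with
  | one => exact ⟨0, 0, 0, by simp [T]⟩
  | mul_left m hm y hy ih =>
    obtain ⟨i, j, k, rfl⟩ := ih
    exact genstep m hm i j k
  | inv_mul_cancel m hm y hy ih =>
    obtain ⟨i, j, k, rfl⟩ := ih
    rw [gen_inv m hm]
    exact genstep m hm i j k

lemma haG : a ∈ G := G.pow_mem (G.mul_mem (G.mul_mem hMZ hMX) hMY) 2
lemma hbG : b ∈ G := G.pow_mem (G.mul_mem (G.mul_mem hMX hMY) hMZ) 2

lemma mem_closure_ab {x : GL6} (hx : x ∈ Subgroup.closure {a, b}) :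
    ∃ i j : ℕ, x = a ^ i * b ^ j := by
  induction hx using Subgroup.closure_induction with
  | mem y hy =>
    rcases hy with rfl | rfl
    · exact ⟨1, 0, by simp⟩
    · exact ⟨0, 1, by simp⟩
  | one => exact ⟨0, 0, by simp⟩
  | mul y z _ _ ihy ihz =>
    obtain ⟨i, j, rfl⟩ := ihy
    obtain ⟨i', j', rfl⟩ := ihz
    exact ⟨i + i', j + j', mul_form i j i' j'⟩
  | inv y _ ihy =>
    obtain ⟨i, j, rfl⟩ := ihy
    refine ⟨3 * i, 3 * j, inv_eq_of_mul_eq_one_right ?_⟩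
    rw [mul_form]
    have : i + 3 * i = 4 * i := by ring
    rw [this, show j + 3 * j = 4 * j from by ring, pow_mul, pow_mul, ha4, hb4,
      one_pow, one_pow, one_mul]

lemma closure_ab_mem (i j : ℕ) : a ^ i * b ^ j ∈ Subgroup.closure ({a, b} : Set GL6) :=
  mul_mem (pow_mem (Subgroup.subset_closure (by simp)) i)
    (pow_mem (Subgroup.subset_closure (by simp)) j)

-- elements of G
def XG : Fin 6 → G :=
  ![1, ⟨MX, hMX⟩, ⟨MY, hMY⟩, ⟨MZ, hMZ⟩, ⟨MY, hMY⟩ * ⟨MX, hMX⟩, ⟨MZ, hMZ⟩ * ⟨MX, hMX⟩]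

lemma coe_XG : ∀ k, (XG k : GL6) = T k := by
  intro k; fin_cases k <;> rfl

def Xa : G := ⟨a, haG⟩
def Xb : G := ⟨b, hbG⟩

/-- Images under π. -/
def PT : Fin 6 → Equiv.Perm (Fin 4) :=
  ![1, Equiv.swap 0 1, Equiv.swap 0 2, Equiv.swap 0 3,
    Equiv.swap 0 2 * Equiv.swap 0 1, Equiv.swap 0 3 * Equiv.swap 0 1]

def PA : Equiv.Perm (Fin 4) := Equiv.swap 0 1 * Equiv.swap 2 3
def PB : Equiv.Perm (Fin 4) := Equiv.swap 0 2 * Equiv.swap 1 3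

lemma pow_mod {M : Type*} [Monoid M] (x : M) (n : ℕ) (h : x ^ n = 1) (i : ℕ) :
    x ^ i = x ^ (i % n) := by
  conv_lhs => rw [← Nat.div_add_mod i n]
  rw [pow_add, pow_mul, h, one_pow, one_mul]

section Pi
variable (π : G →* Equiv.Perm (Fin 4))
    (hX : π ⟨MX, hMX⟩ = Equiv.swap 0 1) (hY : π ⟨MY, hMY⟩ = Equiv.swap 0 2)
    (hZ : π ⟨MZ, hMZ⟩ = Equiv.swap 0 3)

include hX hY hZ

lemma pi_XG : ∀ k, π (XG k) = PT k := by
  intro k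
  fin_cases k
  · exact map_one π
  · exact hX
  · exact hY
  · exact hZ
  · show π (⟨MY, hMY⟩ * ⟨MX, hMX⟩) = _
    rw [_root_.map_mul, hX, hY]; rfl
  · show π (⟨MZ, hMZ⟩ * ⟨MX, hMX⟩) = _
    rw [_root_.map_mul, hX, hZ]; rfl

lemma pi_Xa : π Xa = PA := by
  have h : Xa = (⟨MZ, hMZ⟩ * ⟨MX, hMX⟩ * ⟨MY, hMY⟩ : G) *
      (⟨MZ, hMZ⟩ * ⟨MX, hMX⟩ * ⟨MY, hMY⟩) := by
    apply Subtype.ext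
    show a = MZ * MX * MY * (MZ * MX * MY)
    rw [← sq]; rfl
  rw [h, _root_.map_mul, _root_.map_mul, _root_.map_mul, hX, hY, hZ]
  decide

lemma pi_Xb : π Xb = PB := by
  have h : Xb = (⟨MX, hMX⟩ * ⟨MY, hMY⟩ * ⟨MZ, hMZ⟩ : G) *
      (⟨MX, hMX⟩ * ⟨MY, hMY⟩ * ⟨MZ, hMZ⟩) := by
    apply Subtype.ext
    show b = MX * MY * MZ * (MX * MY * MZ)
    rw [← sq]; rfl
  rw [h, _root_.map_mul, _root_.map_mul, _root_.map_mul, hX, hY, hZ]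
  decide

end Pi

def Vset : Set (Equiv.Perm (Fin 4)) :=
  {1, Equiv.swap 0 1 * Equiv.swap 2 3, Equiv.swap 0 2 * Equiv.swap 1 3,
    Equiv.swap 0 3 * Equiv.swap 1 2}

lemma key (i j : ℕ) (k : Fin 6) : PA ^ i * PB ^ j * PT k ∈ Vset ↔ k = 0 := by
  rw [pow_mod PA 2 (by decide) i, pow_mod PB 2 (by decide) j]
  have h2 : i % 2 < 2 := Nat.mod_lt _ two_pos
  have h2' : j % 2 < 2 := Nat.mod_lt _ two_pos
  interval_cases hi : i % 2 <;> interval_cases hj : j % 2 <;> fin_cases k <;>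
    simp only [Vset, Set.mem_insert_iff, Set.mem_singleton_iff] <;> decide

end Stmt13Aux

open Stmt13Aux in
/-- The preimage under `π` of the Klein four subgroup
`V = {1, (0 1)(2 3), (0 2)(1 3), (0 3)(1 2)}` of `S₄` equals the subgroup of `G` generated by
`a = (M_Z M_X M_Y)²` and `b = (M_X M_Y M_Z)²`; in particular this preimage has order 16. -/
theorem stmt_13 (π : G →* Equiv.Perm (Fin 4))
    (hX : π ⟨MX, hMX⟩ = Equiv.swap 0 1) (hY : π ⟨MY, hMY⟩ = Equiv.swap 0 2)
    (hZ : π ⟨MZ, hMZ⟩ = Equiv.swap 0 3) :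
    (⇑π ⁻¹' {1, Equiv.swap 0 1 * Equiv.swap 2 3, Equiv.swap 0 2 * Equiv.swap 1 3,
        Equiv.swap 0 3 * Equiv.swap 1 2} : Set G)
      = (((Subgroup.closure {a, b}).subgroupOf G : Subgroup G) : Set G) ∧
    Nat.card (⇑π ⁻¹' {1, Equiv.swap 0 1 * Equiv.swap 2 3, Equiv.swap 0 2 * Equiv.swap 1 3,
        Equiv.swap 0 3 * Equiv.swap 1 2} : Set G) = 16 := by
  have main : ∀ x : G, π x ∈ Vset ↔ (x : GL (Fin 6) ℤ) ∈ Subgroup.closure {a, b} := by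
    intro x
    obtain ⟨i, j, k, hx⟩ := cover x.2
    have hxe : x = Xa ^ i * Xb ^ j * XG k := by
      apply Subtype.ext
      simp only [Subgroup.coe_mul, SubmonoidClass.coe_pow, coe_XG]
      exact hx
    have hπx : π x = PA ^ i * PB ^ j * PT k := by
      rw [hxe, _root_.map_mul, _root_.map_mul, map_pow, map_pow, pi_Xa π hX hY hZ, pi_Xb π hX hY hZ,
        pi_XG π hX hY hZ]
    constructor
    · intro h
      rw [hπx] at h
      have hk : k = 0 := (key i j k).mp h
      subst hk
      rw [hx, show T 0 = 1 from rfl, mul_one]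
      exact closure_ab_mem i j
    · intro h
      obtain ⟨i', j', hx'⟩ := mem_closure_ab h
      have hxe' : x = Xa ^ i' * Xb ^ j' := by
        apply Subtype.ext
        simp only [Subgroup.coe_mul, SubmonoidClass.coe_pow]
        exact hx'
      have : π x = PA ^ i' * PB ^ j' * PT 0 := by
        rw [hxe', _root_.map_mul, map_pow, map_pow, pi_Xa π hX hY hZ, pi_Xb π hX hY hZ,
          show PT 0 = 1 from rfl, mul_one]
      rw [this]
      exact (key i' j' 0).mpr rfl
  have E : (⇑π ⁻¹' {1, Equiv.swap 0 1 * Equiv.swap 2 3, Equiv.swap 0 2 * Equiv.swap 1 3,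
        Equiv.swap 0 3 * Equiv.swap 1 2} : Set G)
      = (((Subgroup.closure {a, b}).subgroupOf G : Subgroup G) : Set G) := by
    ext x
    simp only [Set.mem_preimage, SetLike.mem_coe, Subgroup.mem_subgroupOf]
    exact main x
  refine ⟨E, ?_⟩
  rw [E, SetLike.coe_sort_coe]
  have hle : Subgroup.closure ({a, b} : Set (GL (Fin 6) ℤ)) ≤ G :=
    (Subgroup.closure_le _).mpr (by
      rintro x (rfl | rfl)
      · exact haG
      · exact hbG)
  rw [Nat.card_congr (Subgroup.subgroupOfEquivOfLe hle).toEquiv]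
  have hf : Function.Bijective (fun p : Fin 4 × Fin 4 =>
      (⟨a ^ (p.1 : ℕ) * b ^ (p.2 : ℕ), closure_ab_mem _ _⟩ :
        Subgroup.closure ({a, b} : Set (GL (Fin 6) ℤ)))) := by
    constructor
    · intro p q hpq
      have h : a ^ (p.1 : ℕ) * b ^ (p.2 : ℕ) = a ^ (q.1 : ℕ) * b ^ (q.2 : ℕ) :=
        congrArg Subtype.val hpq
      revert h
      revert p q
      decide
    · rintro ⟨x, hx⟩
      obtain ⟨i, j, rfl⟩ := mem_closure_ab hx
      refine ⟨(⟨i % 4, Nat.mod_lt _ (by norm_num)⟩, ⟨j % 4, Nat.mod_lt _ (by norm_num)⟩), ?_⟩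
      apply Subtype.ext
      show a ^ (i % 4) * b ^ (j % 4) = a ^ i * b ^ j
      rw [← pow_mod a 4 ha4 i, ← pow_mod b 4 hb4 j]
  rw [← Nat.card_eq_of_bijective _ hf]
  simp [Nat.card_eq_fintype_card]
end
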